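/- arXiv:1805.08522 — 4 statements merged into one kernel-verified Lean document; each statement's English description precedes it below -/
import Mathlib

section
/- PAC-Bayes theorem (Langford–Seeger form): For any probability distribution P on a finite concept space H, any probability distribution D on the instance space X, any integer m ≥ 2, and any 0 < δ ≤ 1, with probability at least 1 − δ over the choice of an i.i.d. sample S = (x_1, …, x_m) of m instances drawn from D, every probability distribution Q on H satisfies ε̂(Q)·ln(ε̂(Q)/ε(Q)) + (1 − ε̂(Q))·ln((1 − ε̂(Q))/(1 − ε(Q))) ≤ (KL(Q‖P) + ln(2m/δ))/(m − 1), with the conventions 0·ln 0 = 0 and that the left-hand side is +∞ when ε(Q) ∈ {0,1} and ε̂(Q) ≠ ε(Q). -/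
open MeasureTheory Finset

/-- Binary KL divergence (relative entropy between Bernoulli distributions), with the
conventions `0·ln 0 = 0` and value `⊤` when `p ∈ {0,1}` but `q ≠ p`. -/
noncomputable def klBin (q p : ℝ) : EReal :=
  if (p = 0 ∨ p = 1) ∧ q ≠ p then ⊤
  else (((if q = 0 then 0 else q * Real.log (q / p)) +
         (if q = 1 then 0 else (1 - q) * Real.log ((1 - q) / (1 - p)))) : ℝ)

/-- KL divergence between two distributions on a finite concept space, with the conventions
`0·ln(0/p) = 0` and value `⊤` if `Q c > 0` while `P c = 0` for some `c`. -/
noncomputable def klDiv {H : Type*} [Fintype H] (Q P : H → ℝ) : EReal :=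
  if ∃ c, P c = 0 ∧ Q c ≠ 0 then ⊤
  else ((∑ c, if Q c = 0 then 0 else Q c * Real.log (Q c / P c)) : ℝ)

open scoped ENNReal

/-- Log-sum inequality. -/
lemma log_sum {ι : Type*} (s : Finset ι) (a b : ι → ℝ)
    (ha : ∀ i ∈ s, 0 ≤ a i) (hb : ∀ i ∈ s, 0 ≤ b i)
    (hab : ∀ i ∈ s, b i = 0 → a i = 0) :
    (∑ i ∈ s, a i) * Real.log ((∑ i ∈ s, a i) / (∑ i ∈ s, b i)) ≤
      ∑ i ∈ s, a i * Real.log (a i / b i) := by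
  set A := ∑ i ∈ s, a i with hA
  set B := ∑ i ∈ s, b i with hB
  rcases eq_or_lt_of_le (Finset.sum_nonneg ha) with h0 | hApos
  · -- A = 0, all a i = 0
    have hall : ∀ i ∈ s, a i = 0 := by
      intro i hi
      exact (Finset.sum_eq_zero_iff_of_nonneg ha).mp h0.symm i hi
    have hA0 : A = 0 := h0.symm
    rw [hA0, zero_mul]
    apply Finset.sum_nonneg
    intro i hi; rw [hall i hi]; simp
  · have hBpos : 0 < B := by
      rcases eq_or_lt_of_le (Finset.sum_nonneg hb) with h0 | h; swap
      · exact h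
      · exfalso
        have hall : ∀ i ∈ s, b i = 0 := by
          intro i hi; exact (Finset.sum_eq_zero_iff_of_nonneg hb).mp h0.symm i hi
        have : A = 0 := Finset.sum_eq_zero fun i hi => hab i hi (hall i hi)
        exact absurd this (ne_of_gt hApos)
    have key : ∀ i ∈ s, a i * Real.log (A / B) ≤
        a i * Real.log (a i / b i) + (A / B) * b i - a i := by
      intro i hi
      rcases eq_or_lt_of_le (ha i hi) with h0 | hai
      · rw [← h0]
        have : 0 ≤ (A / B) * b i := mul_nonneg (le_of_lt (div_pos hApos hBpos)) (hb i hi)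
        simp; linarith
      · have hbi : 0 < b i := by
          rcases eq_or_lt_of_le (hb i hi) with h0 | h
          · exact absurd (hab i hi h0.symm) (ne_of_gt hai)
          · exact h
        have hx : 0 < (A * b i) / (B * a i) :=
          div_pos (mul_pos hApos hbi) (mul_pos hBpos hai)
        have hlog := Real.log_le_sub_one_of_pos hx
        have hlogeq : Real.log ((A * b i) / (B * a i)) =
            Real.log (A / B) - Real.log (a i / b i) := by
          rw [show (A * b i) / (B * a i) = (A / B) / (a i / b i) by
              field_simp,
            Real.log_div (by positivity) (by positivity)]
        rw [hlogeq] at hlog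
        have := mul_le_mul_of_nonneg_left hlog (le_of_lt hai)
        have heq : a i * ((A * b i) / (B * a i) - 1) = (A / B) * b i - a i := by
          field_simp
        rw [heq] at this
        linarith
    calc A * Real.log (A / B) = ∑ i ∈ s, a i * Real.log (A / B) := by
            rw [← Finset.sum_mul]
      _ ≤ ∑ i ∈ s, (a i * Real.log (a i / b i) + (A / B) * b i - a i) :=
            Finset.sum_le_sum key
      _ = (∑ i ∈ s, a i * Real.log (a i / b i)) + (A / B) * B - A := by
            rw [Finset.sum_sub_distrib, Finset.sum_add_distrib, ← Finset.mul_sum]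
      _ = ∑ i ∈ s, a i * Real.log (a i / b i) := by
            rw [div_mul_cancel₀ _ (ne_of_gt hBpos)]; ring

noncomputable def klR (q p : ℝ) : ℝ :=
  q * Real.log (q / p) + (1 - q) * Real.log ((1 - q) / (1 - p))

lemma klR_nonneg {q p : ℝ} (hq0 : 0 ≤ q) (hq1 : q ≤ 1) (_hp0 : 0 ≤ p) (_hp1 : p ≤ 1)
    (h0 : p = 0 → q = 0) (h1 : p = 1 → q = 1) : 0 ≤ klR q p := by
  have := log_sum (Finset.univ : Finset Bool)
    (fun x => bif x then q else 1 - q) (fun x => bif x then p else 1 - p)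
    (by intro i _; cases i <;> simp <;> linarith)
    (by intro i _; cases i <;> simp <;> linarith)
    (by intro i _; cases i <;> simp <;> intro h
        · have := h1 (by linarith); linarith
        · exact h0 h)
  simpa [Fintype.sum_bool, klR] using this

lemma klR_zero_zero : klR 0 0 = 0 := by simp [klR]
lemma klR_one_one : klR 1 1 = 0 := by simp [klR]

lemma klR_combo {ι : Type*} [Fintype ι] (Q q p : ι → ℝ)
    (hQ0 : ∀ i, 0 ≤ Q i) (hQ1 : ∑ i, Q i = 1)
    (hq0 : ∀ i, 0 ≤ q i) (hq1 : ∀ i, q i ≤ 1)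
    (hp0 : ∀ i, 0 ≤ p i) (hp1 : ∀ i, p i ≤ 1)
    (h0 : ∀ i, p i = 0 → q i = 0) (h1 : ∀ i, p i = 1 → q i = 1) :
    klR (∑ i, Q i * q i) (∑ i, Q i * p i) ≤ ∑ i, Q i * klR (q i) (p i) := by
  have key : ∀ (u v : ι → ℝ), (∀ i, 0 ≤ u i) → (∀ i, u i ≤ 1) → (∀ i, 0 ≤ v i) →
      (∀ i, v i = 0 → u i = 0) →
      (∑ i, Q i * u i) * Real.log ((∑ i, Q i * u i) / (∑ i, Q i * v i)) ≤
        ∑ i, Q i * (u i * Real.log (u i / v i)) := by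
    intro u v hu0 _hu1 hv0 huv
    have := log_sum Finset.univ (fun i => Q i * u i) (fun i => Q i * v i)
      (fun i _ => mul_nonneg (hQ0 i) (hu0 i))
      (fun i _ => mul_nonneg (hQ0 i) (hv0 i))
      (by intro i _ h
          rcases mul_eq_zero.mp h with h | h
          · rw [h, zero_mul]
          · rw [huv i h, mul_zero])
    refine this.trans (le_of_eq (Finset.sum_congr rfl fun i _ => ?_))
    rcases eq_or_ne (Q i) 0 with hQ | hQ
    · rw [hQ]; ring
    · rw [mul_div_mul_left _ _ hQ]; ring
  have h1' := key q p hq0 hq1 hp0 h0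
  have h2' := key (fun i => 1 - q i) (fun i => 1 - p i)
    (fun i => by linarith [hq1 i]) (fun i => by linarith [hq0 i])
    (fun i => by linarith [hp1 i])
    (fun i hp => by have := h1 i (by linarith); linarith)
  have e1 : ∑ i, Q i * (1 - q i) = 1 - ∑ i, Q i * q i := by
    simp only [mul_sub, mul_one, Finset.sum_sub_distrib, hQ1]
  have e2 : ∑ i, Q i * (1 - p i) = 1 - ∑ i, Q i * p i := by
    simp only [mul_sub, mul_one, Finset.sum_sub_distrib, hQ1]
  rw [e1, e2] at h2'
  have expand : ∑ i, Q i * klR (q i) (p i) =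
      (∑ i, Q i * (q i * Real.log (q i / p i))) +
      ∑ i, Q i * ((1 - q i) * Real.log ((1 - q i) / (1 - p i))) := by
    rw [← Finset.sum_add_distrib]
    exact Finset.sum_congr rfl fun i _ => by rw [klR]; ring
  rw [klR, expand]
  exact add_le_add h1' h2'

lemma dv_ineq {ι : Type*} [Fintype ι] (Q P f : ι → ℝ)
    (hQ0 : ∀ i, 0 ≤ Q i) (hQ1 : ∑ i, Q i = 1)
    (hP0 : ∀ i, 0 ≤ P i) (hac : ∀ i, P i = 0 → Q i = 0) :
    ∑ i, Q i * f i ≤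
      (∑ i, Q i * Real.log (Q i / P i)) + Real.log (∑ i, P i * Real.exp (f i)) := by
  have hls := log_sum Finset.univ Q (fun i => P i * Real.exp (f i))
    (fun i _ => hQ0 i)
    (fun i _ => mul_nonneg (hP0 i) (Real.exp_pos _).le)
    (by intro i _ hb
        rcases mul_eq_zero.mp hb with hb | hb
        · exact hac i hb
        · exact absurd hb (Real.exp_ne_zero _))
  rw [hQ1, one_mul] at hls
  set B := ∑ i, P i * Real.exp (f i) with hB
  have hterm : ∀ i ∈ Finset.univ, Q i * Real.log (Q i / (P i * Real.exp (f i))) =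
      Q i * Real.log (Q i / P i) - Q i * f i := by
    intro i _
    rcases eq_or_ne (Q i) 0 with hQ | hQ
    · rw [hQ]; ring
    · have hPi : 0 < P i := lt_of_le_of_ne (hP0 i) (fun h => hQ (hac i h.symm))
      have hQi : 0 < Q i := lt_of_le_of_ne (hQ0 i) (Ne.symm hQ)
      rw [show Q i / (P i * Real.exp (f i)) = (Q i / P i) * Real.exp (-(f i)) by
          rw [Real.exp_neg]; field_simp,
        Real.log_mul (by positivity) (Real.exp_ne_zero _), Real.log_exp]
      ring
  rw [Finset.sum_congr rfl hterm, Finset.sum_sub_distrib] at hls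
  have hBpos : 0 < B := by
    have hne : ∃ i, Q i ≠ 0 := by
      by_contra hall
      push_neg at hall
      rw [Finset.sum_eq_zero (fun i _ => hall i)] at hQ1
      norm_num at hQ1
    obtain ⟨i, hi⟩ := hne
    have hPi : 0 < P i := lt_of_le_of_ne (hP0 i) (fun h => hi (hac i h.symm))
    refine Finset.sum_pos' (fun j _ => mul_nonneg (hP0 j) (Real.exp_pos _).le)
      ⟨i, Finset.mem_univ i, mul_pos hPi (Real.exp_pos _)⟩
  have hlog1 : Real.log (1 / B) = -Real.log B := by
    rw [one_div, Real.log_inv]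
  rw [hlog1] at hls
  linarith

lemma exp_nat_mul_log {x : ℝ} {k : ℕ} (h : 0 < x ∨ k = 0) :
    Real.exp ((k : ℝ) * Real.log x) = x ^ k := by
  rcases h with hx | hk
  · rw [Real.exp_nat_mul, Real.exp_log hx]
  · subst hk; simp

lemma binom_le_one {m k : ℕ} (hk : k ≤ m) {q : ℝ} (h0 : 0 ≤ q) (h1 : q ≤ 1) :
    (m.choose k : ℝ) * q ^ k * (1 - q) ^ (m - k) ≤ 1 := by
  have hexp := add_pow q (1 - q) m
  rw [add_sub_cancel, one_pow] at hexp
  calc (m.choose k : ℝ) * q ^ k * (1 - q) ^ (m - k)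
      = q ^ k * (1 - q) ^ (m - k) * (m.choose k : ℝ) := by ring
    _ ≤ ∑ j ∈ range (m + 1), q ^ j * (1 - q) ^ (m - j) * (m.choose j : ℝ) := by
        apply Finset.single_le_sum (f := fun j => q ^ j * (1 - q) ^ (m - j) * (m.choose j : ℝ))
        · intro j _
          exact mul_nonneg (mul_nonneg (pow_nonneg h0 _)
            (pow_nonneg (by linarith) _)) (Nat.cast_nonneg _)
        · exact Finset.mem_range.mpr (Nat.lt_succ_of_le hk)
    _ = 1 := hexp.symm

lemma chernoff_term {m k : ℕ} (hm : 1 ≤ m) (hk : k ≤ m) {p : ℝ} (hp0 : 0 ≤ p) (hp1 : p ≤ 1) :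
    (m.choose k : ℝ) * p ^ k * (1 - p) ^ (m - k) *
      Real.exp (((m : ℝ) - 1) * klR ((k : ℝ) / m) p) ≤ 1 := by
  have hm0 : (m : ℝ) ≠ 0 := Nat.cast_ne_zero.mpr (by omega)
  rcases eq_or_lt_of_le hp0 with hp | hp
  · -- p = 0
    rcases Nat.eq_zero_or_pos k with hk0 | hk0
    · subst hk0
      simp [← hp, klR_zero_zero]
    · rw [← hp, zero_pow (by omega : k ≠ 0)]
      have h1p : ((1:ℝ) - 0) ^ (m - k) = 1 := by norm_num
      rw [mul_zero, zero_mul, zero_mul]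
      norm_num
  rcases eq_or_lt_of_le hp1 with hp1' | hp1'
  · -- p = 1
    rcases eq_or_lt_of_le hk with hkm | hkm
    · subst hkm
      rw [hp1']
      simp [div_self hm0, klR_one_one, Nat.choose_self]
    · rw [hp1']
      have : (1 : ℝ) - 1 = 0 := by ring
      rw [this, zero_pow (Nat.sub_ne_zero_of_lt hkm)]
      have := Real.exp_pos (((m : ℝ) - 1) * klR ((k : ℝ) / m) 1)
      nlinarith
  · -- 0 < p < 1
    set q : ℝ := (k : ℝ) / m with hq
    have hq0 : 0 ≤ q := by positivity
    have hq1 : q ≤ 1 := by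
      rw [hq, div_le_one (by positivity)]
      exact_mod_cast hk
    have hklnn : 0 ≤ klR q p := klR_nonneg hq0 hq1 hp0 hp1
      (fun h => absurd h (ne_of_gt hp)) (fun h => absurd h (ne_of_lt hp1'))
    have hexp_le : Real.exp (((m : ℝ) - 1) * klR q p) ≤ Real.exp ((m : ℝ) * klR q p) :=
      Real.exp_le_exp.mpr (by nlinarith)
    have hcast : ((m - k : ℕ) : ℝ) = (m : ℝ) - k := by
      rw [Nat.cast_sub hk]
    have hmq : (m : ℝ) * q = k := by rw [hq]; field_simp
    have hm1q : (m : ℝ) * (1 - q) = ((m - k : ℕ) : ℝ) := by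
      rw [hcast, hq]; field_simp
    have hexp_eq : Real.exp ((m : ℝ) * klR q p) = (q / p) ^ k * ((1 - q) / (1 - p)) ^ (m - k) := by
      rw [klR, mul_add, ← mul_assoc, ← mul_assoc, hmq, hm1q, Real.exp_add]
      congr 1
      · apply exp_nat_mul_log
        rcases Nat.eq_zero_or_pos k with h | h
        · exact Or.inr h
        · left
          apply div_pos _ hp
          rw [hq]
          positivity
      · apply exp_nat_mul_log
        rcases Nat.eq_zero_or_pos (m - k) with h | h
        · exact Or.inr h
        · left
          apply div_pos _ (by linarith)
          have : (k : ℝ) < m := by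
            have : k < m := by omega
            exact_mod_cast this
          rw [hq]
          have : q < 1 := by rw [hq, div_lt_one (by positivity)]; exact this
          linarith
    calc (m.choose k : ℝ) * p ^ k * (1 - p) ^ (m - k) *
          Real.exp (((m : ℝ) - 1) * klR q p)
        ≤ (m.choose k : ℝ) * p ^ k * (1 - p) ^ (m - k) * Real.exp ((m : ℝ) * klR q p) := by
          apply mul_le_mul_of_nonneg_left hexp_le
          exact mul_nonneg (mul_nonneg (Nat.cast_nonneg _) (pow_nonneg hp0 _))
            (pow_nonneg (by linarith) _)
      _ = (m.choose k : ℝ) * ((q / p) ^ k * p ^ k) *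
            (((1 - q) / (1 - p)) ^ (m - k) * (1 - p) ^ (m - k)) := by
          rw [hexp_eq]; ring
      _ = (m.choose k : ℝ) * q ^ k * (1 - q) ^ (m - k) := by
          have e1 : (q / p) ^ k * p ^ k = q ^ k := by
            rw [div_pow]
            exact div_mul_cancel₀ _ (pow_ne_zero k (ne_of_gt hp))
          have e2 : ((1 - q) / (1 - p)) ^ (m - k) * (1 - p) ^ (m - k) = (1 - q) ^ (m - k) := by
            rw [div_pow]
            exact div_mul_cancel₀ _
              (pow_ne_zero (m - k) (ne_of_gt (by linarith : (0:ℝ) < 1 - p)))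
          rw [e1, e2]
      _ ≤ 1 := binom_le_one hk hq0 hq1

open MeasureTheory in
lemma eval_preimage_null {X : Type*} [MeasurableSpace X] (D : Measure X)
    [IsProbabilityMeasure D] (m : ℕ) {B : Set X} (hB0 : D B = 0) :
    Measure.pi (fun _ : Fin m => D) {S | ∃ i, S i ∈ B} = 0 := by
  have h1 : {S : Fin m → X | ∃ i, S i ∈ B} = ⋃ i, (fun S : Fin m → X => S i) ⁻¹' B := by
    ext S; simp [Set.mem_iUnion, Set.mem_preimage]
  rw [h1]
  refine measure_iUnion_null fun i => ?_
  have h2 : (fun S : Fin m → X => S i) ⁻¹' B ⊆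
      Set.pi Set.univ (fun j => if j = i then B else Set.univ) := by
    intro S hS j _
    by_cases hj : j = i
    · subst hj; simpa using hS
    · simp [hj]
  refine le_antisymm (le_trans (measure_mono h2) ?_) zero_le
  rw [Measure.pi_pi]
  rw [Finset.prod_eq_zero (Finset.mem_univ i) (by simp [hB0])]

open MeasureTheory in
lemma binom_law {X : Type*} [MeasurableSpace X] (D : Measure X) [IsProbabilityMeasure D]
    (m : ℕ) (p : X → Prop) [DecidablePred p] (hB : MeasurableSet {x | p x}) (k : ℕ) :
    Measure.pi (fun _ : Fin m => D)
      {S : Fin m → X | (Finset.univ.filter fun i => p (S i)).card = k} =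
      (m.choose k : ℝ≥0∞) * D {x | p x} ^ k * D {x | p x}ᶜ ^ (m - k) := by
  set B := {x | p x} with hBdef
  have hsets : ∀ A : Finset (Fin m), MeasurableSet
      (Set.pi Set.univ fun i : Fin m => if i ∈ A then B else Bᶜ) :=
    fun A => MeasurableSet.pi (Set.to_countable _)
      (fun i _ => by by_cases hi : i ∈ A <;> simp [hi, hB, hB.compl])
  have hmem : ∀ (A : Finset (Fin m)) (S : Fin m → X),
      S ∈ Set.pi Set.univ (fun i : Fin m => if i ∈ A then B else Bᶜ) ↔
        Finset.univ.filter (fun i => p (S i)) = A := by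
    intro A S
    simp only [Set.mem_pi, Set.mem_univ, true_imp_iff]
    constructor
    · intro hA
      ext i
      simp only [Finset.mem_filter, Finset.mem_univ, true_and]
      constructor
      · intro hpi
        by_contra hi
        have := hA i; rw [if_neg hi] at this; exact this hpi
      · intro hi
        have := hA i; rwa [if_pos hi] at this
    · intro hf i
      by_cases hi : i ∈ A
      · rw [if_pos hi]
        rw [← hf] at hi
        exact (Finset.mem_filter.mp hi).2
      · rw [if_neg hi]
        rw [← hf] at hi
        intro hpi
        exact hi (Finset.mem_filter.mpr ⟨Finset.mem_univ i, hpi⟩)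
  have hdecomp : {S : Fin m → X | (Finset.univ.filter fun i => p (S i)).card = k} =
      ⋃ A ∈ Finset.powersetCard k (Finset.univ : Finset (Fin m)),
        Set.pi Set.univ (fun i : Fin m => if i ∈ A then B else Bᶜ) := by
    ext S
    simp only [Set.mem_setOf_eq, Set.mem_iUnion, Finset.mem_powersetCard, exists_prop]
    constructor
    · intro hS
      exact ⟨Finset.univ.filter fun i => p (S i), ⟨Finset.subset_univ _, hS⟩,
        (hmem _ S).mpr rfl⟩
    · rintro ⟨A, ⟨-, hcard⟩, hA⟩
      rw [(hmem A S).mp hA, hcard]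
  rw [hdecomp, measure_biUnion_finset ?disj (fun A _ => hsets A)]
  case disj =>
    intro A _ A' _ hne
    simp only [Function.onFun]
    rw [Set.disjoint_left]
    intro S hS hS'
    exact hne (((hmem A S).mp hS).symm.trans ((hmem A' S).mp hS'))
  have hmeas_eq : ∀ A ∈ Finset.powersetCard k (Finset.univ : Finset (Fin m)),
      Measure.pi (fun _ : Fin m => D) (Set.pi Set.univ fun i : Fin m => if i ∈ A then B else Bᶜ)
        = D B ^ k * D Bᶜ ^ (m - k) := by
    intro A hA
    obtain ⟨-, hcard⟩ := Finset.mem_powersetCard.mp hA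
    rw [Measure.pi_pi]
    have hDite : ∀ i : Fin m, D (if i ∈ A then B else Bᶜ) = if i ∈ A then D B else D Bᶜ :=
      fun i => by by_cases hi : i ∈ A <;> simp [hi]
    rw [Finset.prod_congr rfl (fun i _ => hDite i), Finset.prod_ite,
      Finset.prod_const, Finset.prod_const]
    have hc1 : (Finset.univ.filter fun i : Fin m => i ∈ A).card = k := by
      rw [show (Finset.univ.filter fun i : Fin m => i ∈ A) = A by ext i; simp, hcard]
    have hc2 : (Finset.univ.filter fun i : Fin m => ¬ i ∈ A).card = m - k := by
      rw [show (Finset.univ.filter fun i : Fin m => ¬ i ∈ A) = Aᶜ by ext i; simp,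
        Finset.card_compl, hcard, Fintype.card_fin]
    rw [hc1, hc2]
  rw [Finset.sum_congr rfl hmeas_eq, Finset.sum_const, Finset.card_powersetCard,
    Finset.card_univ, Fintype.card_fin, nsmul_eq_mul, mul_assoc]

lemma card_filter_measurable {X : Type*} [MeasurableSpace X] (m : ℕ) (p : X → Prop)
    [DecidablePred p] (hB : MeasurableSet {x | p x}) :
    Measurable (fun S : Fin m → X => (Finset.univ.filter fun i => p (S i)).card) := by
  have hrw : (fun S : Fin m → X => (Finset.univ.filter fun i => p (S i)).card) =
      fun S => ∑ i : Fin m, if p (S i) then 1 else 0 := by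
    funext S; rw [Finset.card_filter]
  rw [hrw]
  apply Finset.measurable_sum
  intro i _
  have hset : MeasurableSet {S : Fin m → X | p (S i)} := (measurable_pi_apply i) hB
  exact Measurable.ite hset measurable_const measurable_const

open MeasureTheory in
lemma lintegral_card_fun {X : Type*} [MeasurableSpace X] (D : Measure X) [IsProbabilityMeasure D]
    (m : ℕ) (p : X → Prop) [DecidablePred p] (hB : MeasurableSet {x | p x}) (φ : ℕ → ℝ≥0∞) :
    ∫⁻ S, φ ((Finset.univ.filter fun i : Fin m => p (S i)).card)
        ∂(Measure.pi fun _ : Fin m => D)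
      = ∑ k ∈ Finset.range (m + 1),
          φ k * ((m.choose k : ℝ≥0∞) * D {x | p x} ^ k * D {x | p x}ᶜ ^ (m - k)) := by
  have hKle : ∀ S : Fin m → X, (Finset.univ.filter fun i : Fin m => p (S i)).card ≤ m := by
    intro S
    simpa using Finset.card_filter_le Finset.univ (fun i : Fin m => p (S i))
  have hfun : ∀ S : Fin m → X, φ ((Finset.univ.filter fun i : Fin m => p (S i)).card) =
      ∑ k ∈ Finset.range (m + 1),
        if (Finset.univ.filter fun i : Fin m => p (S i)).card = k then φ k else 0 := by
    intro S
    rw [Finset.sum_ite_eq (Finset.range (m + 1))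
      ((Finset.univ.filter fun i : Fin m => p (S i)).card) φ,
      if_pos (Finset.mem_range.mpr (Nat.lt_succ_of_le (hKle S)))]
  have hsetm : ∀ k : ℕ, MeasurableSet
      {S : Fin m → X | (Finset.univ.filter fun i : Fin m => p (S i)).card = k} :=
    fun k => (card_filter_measurable m p hB) (measurableSet_singleton k)
  calc ∫⁻ S, φ ((Finset.univ.filter fun i : Fin m => p (S i)).card)
        ∂(Measure.pi fun _ : Fin m => D)
      = ∫⁻ S, ∑ k ∈ Finset.range (m + 1),
          if (Finset.univ.filter fun i : Fin m => p (S i)).card = k then φ k else 0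
          ∂(Measure.pi fun _ : Fin m => D) := lintegral_congr hfun
    _ = ∑ k ∈ Finset.range (m + 1), ∫⁻ S,
          (if (Finset.univ.filter fun i : Fin m => p (S i)).card = k then φ k else 0)
          ∂(Measure.pi fun _ : Fin m => D) := by
        apply lintegral_finset_sum
        intro k _
        exact Measurable.ite (hsetm k) measurable_const measurable_const
    _ = ∑ k ∈ Finset.range (m + 1),
          φ k * ((m.choose k : ℝ≥0∞) * D {x | p x} ^ k * D {x | p x}ᶜ ^ (m - k)) := by
        refine Finset.sum_congr rfl fun k _ => ?_
        have hind : ∀ S : Fin m → X,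
            (if (Finset.univ.filter fun i : Fin m => p (S i)).card = k then φ k else 0) =
            Set.indicator {S : Fin m → X |
              (Finset.univ.filter fun i : Fin m => p (S i)).card = k} (fun _ => φ k) S := by
          intro S
          rw [Set.indicator_apply]
          rfl
        rw [lintegral_congr hind, lintegral_indicator_const (hsetm k),
          binom_law D m p hB k]

lemma ifs_eq_klR (q p : ℝ) :
    ((if q = 0 then 0 else q * Real.log (q / p)) +
     (if q = 1 then 0 else (1 - q) * Real.log ((1 - q) / (1 - p)))) = klR q p := by
  rw [klR]
  rcases eq_or_ne q 0 with h0 | h0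
  · rcases eq_or_ne q 1 with h1 | h1
    · rw [h0] at h1; norm_num at h1
    · rw [if_pos h0, if_neg h1, h0, zero_mul, zero_add]
  · rcases eq_or_ne q 1 with h1 | h1
    · rw [if_neg h0, if_pos h1, h1]
      simp
    · rw [if_neg h0, if_neg h1]

lemma klBin_eq_klR {q p : ℝ} (hc : ¬((p = 0 ∨ p = 1) ∧ q ≠ p)) :
    klBin q p = ((klR q p : ℝ) : EReal) := by
  rw [klBin, if_neg hc, ifs_eq_klR]

lemma main_bound {H : Type*} [Fintype H] (P Q : H → ℝ) (pc : H → ℝ) (Kc : H → ℕ)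
    (m : ℕ) (hm : 2 ≤ m) (δ : ℝ) (hδ0 : 0 < δ) (hδ1 : δ ≤ 1)
    (hP0 : ∀ c, 0 ≤ P c) (hP1 : ∑ c, P c = 1)
    (hQ0 : ∀ c, 0 ≤ Q c) (hQ1 : ∑ c, Q c = 1)
    (hpc0 : ∀ c, 0 ≤ pc c) (hpc1 : ∀ c, pc c ≤ 1)
    (hK : ∀ c, Kc c ≤ m)
    (hΩ0 : ∀ c, pc c = 0 → Kc c = 0) (hΩ1 : ∀ c, pc c = 1 → Kc c = m)
    (hG : ∑ c, P c * Real.exp (((m : ℝ) - 1) * klR ((Kc c : ℝ) / m) (pc c)) ≤ 2 * m / δ) :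
    klBin (∑ c, Q c * ((Kc c : ℝ) / m)) (∑ c, Q c * pc c) ≤
      (klDiv Q P + ((Real.log (2 * m / δ) : ℝ) : EReal)) / (((m : ℝ) - 1 : ℝ) : EReal) := by
  have hm0 : (m : ℝ) ≠ 0 := Nat.cast_ne_zero.mpr (by omega)
  have hmR : (2 : ℝ) ≤ (m : ℝ) := by exact_mod_cast hm
  have hM : (0 : ℝ) < (m : ℝ) - 1 := by linarith
  have hL : 0 ≤ Real.log (2 * m / δ) := by
    apply Real.log_nonneg
    rw [le_div_iff₀ hδ0]
    linarith
  set qc : H → ℝ := fun c => (Kc c : ℝ) / m with hqcdef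
  have hqc0 : ∀ c, 0 ≤ qc c := fun c => by positivity
  have hqc1 : ∀ c, qc c ≤ 1 := fun c => by
    rw [hqcdef]
    dsimp only
    rw [div_le_one (by positivity)]
    exact_mod_cast hK c
  have hΩ0' : ∀ c, pc c = 0 → qc c = 0 := fun c hc => by
    rw [hqcdef]; dsimp only; rw [hΩ0 c hc]; simp
  have hΩ1' : ∀ c, pc c = 1 → qc c = 1 := fun c hc => by
    rw [hqcdef]; dsimp only; rw [hΩ1 c hc, div_self hm0]
  set qbar := ∑ c, Q c * qc c with hqbar
  set pbar := ∑ c, Q c * pc c with hpbar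
  have hqbar0 : 0 ≤ qbar := Finset.sum_nonneg fun c _ => mul_nonneg (hQ0 c) (hqc0 c)
  have hpbar0 : 0 ≤ pbar := Finset.sum_nonneg fun c _ => mul_nonneg (hQ0 c) (hpc0 c)
  have hqbar1 : qbar ≤ 1 := by
    rw [hqbar, ← hQ1]
    exact Finset.sum_le_sum fun c _ => by
      calc Q c * qc c ≤ Q c * 1 := mul_le_mul_of_nonneg_left (hqc1 c) (hQ0 c)
        _ = Q c := mul_one _
  have hpbar1 : pbar ≤ 1 := by
    rw [hpbar, ← hQ1]
    exact Finset.sum_le_sum fun c _ => by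
      calc Q c * pc c ≤ Q c * 1 := mul_le_mul_of_nonneg_left (hpc1 c) (hQ0 c)
        _ = Q c := mul_one _
  by_cases hex : ∃ c, P c = 0 ∧ Q c ≠ 0
  · rw [klDiv, if_pos hex, EReal.top_add_coe,
      EReal.top_div_of_pos_ne_top (EReal.coe_pos.mpr hM) (EReal.coe_ne_top _)]
    exact le_top
  · push_neg at hex
    have hac : ∀ c, P c = 0 → Q c = 0 := hex
    rw [klDiv, if_neg (by push_neg; exact hac)]
    have hKLrw : (∑ c, if Q c = 0 then 0 else Q c * Real.log (Q c / P c)) =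
        ∑ c, Q c * Real.log (Q c / P c) := by
      refine Finset.sum_congr rfl fun c _ => ?_
      rcases eq_or_ne (Q c) 0 with h | h
      · rw [if_pos h, h, zero_mul]
      · rw [if_neg h]
    have hKLnn : 0 ≤ ∑ c, Q c * Real.log (Q c / P c) := by
      have hls := log_sum Finset.univ Q P (fun c _ => hQ0 c) (fun c _ => hP0 c)
        (fun c _ h => hac c h)
      rw [hQ1, hP1] at hls
      simpa using hls
    by_cases hp01 : pbar = 0 ∨ pbar = 1
    · -- degenerate case: qbar = pbar, klBin = 0
      have hqp : qbar = pbar := by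
        rcases hp01 with h0 | h1
        · rw [h0, hqbar]
          apply Finset.sum_eq_zero
          intro c _
          have hterm := (Finset.sum_eq_zero_iff_of_nonneg
            (fun c _ => mul_nonneg (hQ0 c) (hpc0 c))).mp (hpbar ▸ h0) c (Finset.mem_univ c)
          rcases mul_eq_zero.mp hterm with h | h
          · rw [h, zero_mul]
          · rw [hΩ0' c h, mul_zero]
        · rw [h1, hqbar]
          have hz : ∑ c, Q c * (1 - pc c) = 0 := by
            simp only [mul_sub, mul_one, Finset.sum_sub_distrib, hQ1]
            rw [← hpbar, h1]; ring
          have hterm := (Finset.sum_eq_zero_iff_of_nonneg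
            (fun c _ => mul_nonneg (hQ0 c) (by linarith [hpc1 c]))).mp hz
          rw [← hQ1]
          refine Finset.sum_congr rfl fun c _ => ?_
          rcases mul_eq_zero.mp (hterm c (Finset.mem_univ c)) with h | h
          · rw [h, zero_mul]
          · rw [hΩ1' c (by linarith), mul_one]
      have hklBin : klBin qbar pbar = ((0 : ℝ) : EReal) := by
        rw [klBin_eq_klR (fun hc => hc.2 hqp), hqp]
        rcases hp01 with h | h
        · rw [h, klR_zero_zero]
        · rw [h, klR_one_one]
      rw [hklBin, ← EReal.coe_add, ← EReal.coe_div, EReal.coe_le_coe_iff, hKLrw]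
      apply div_nonneg _ (le_of_lt hM)
      exact add_nonneg hKLnn hL
    · -- main case: 0 < pbar < 1
      have hc' : ¬((pbar = 0 ∨ pbar = 1) ∧ qbar ≠ pbar) := fun hc => hp01 hc.1
      rw [klBin_eq_klR hc', ← EReal.coe_add, ← EReal.coe_div, EReal.coe_le_coe_iff, hKLrw]
      have h1 : klR qbar pbar ≤ ∑ c, Q c * klR (qc c) (pc c) :=
        klR_combo Q qc pc hQ0 hQ1 hqc0 hqc1 hpc0 hpc1 hΩ0' hΩ1'
      have hYpos : 0 < ∑ c, P c * Real.exp (((m : ℝ) - 1) * klR (qc c) (pc c)) := by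
        have hne : ∃ c, P c ≠ 0 := by
          by_contra hall
          push_neg at hall
          rw [Finset.sum_eq_zero (fun c _ => hall c)] at hP1
          norm_num at hP1
        obtain ⟨c, hc⟩ := hne
        refine Finset.sum_pos' (fun j _ => mul_nonneg (hP0 j) (Real.exp_pos _).le)
          ⟨c, Finset.mem_univ c, mul_pos (lt_of_le_of_ne (hP0 c) (Ne.symm hc)) (Real.exp_pos _)⟩
      have h2 := dv_ineq Q P (fun c => ((m : ℝ) - 1) * klR (qc c) (pc c)) hQ0 hQ1 hP0 hac
      have h3 : Real.log (∑ c, P c * Real.exp (((m : ℝ) - 1) * klR (qc c) (pc c))) ≤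
          Real.log (2 * m / δ) := Real.log_le_log hYpos hG
      have h4 : ((m : ℝ) - 1) * klR qbar pbar ≤
          (∑ c, Q c * Real.log (Q c / P c)) + Real.log (2 * m / δ) := by
        calc ((m : ℝ) - 1) * klR qbar pbar
            ≤ ((m : ℝ) - 1) * ∑ c, Q c * klR (qc c) (pc c) :=
              mul_le_mul_of_nonneg_left h1 (le_of_lt hM)
          _ = ∑ c, Q c * (((m : ℝ) - 1) * klR (qc c) (pc c)) := by
              rw [Finset.mul_sum]
              exact Finset.sum_congr rfl fun c _ => by ring
          _ ≤ (∑ c, Q c * Real.log (Q c / P c)) +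
              Real.log (∑ c, P c * Real.exp (((m : ℝ) - 1) * klR (qc c) (pc c))) := h2
          _ ≤ (∑ c, Q c * Real.log (Q c / P c)) + Real.log (2 * m / δ) := by linarith
      rw [le_div_iff₀ hM]
      linarith

open MeasureTheory in
/-- **PAC-Bayes theorem (Langford–Seeger form).** For any prior `P` on a finite concept
space `H`, any distribution `D` on instances, any `m ≥ 2` and `0 < δ ≤ 1`, with probability
at least `1 - δ` over an i.i.d. sample `S` of size `m` from `D`, every distribution `Q` on `H`
satisfies `kl(ε̂(Q) ‖ ε(Q)) ≤ (KL(Q‖P) + ln(2m/δ)) / (m - 1)`. -/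
theorem pac_bayes_langford_seeger
    {X : Type*} [MeasurableSpace X] (D : Measure X) [IsProbabilityMeasure D]
    {H : Type*} [Fintype H]
    (h : H → X → Bool) (hMeas : ∀ c, Measurable (h c))
    (t : X → Bool) (ht : Measurable t)
    (P : H → ℝ) (hP0 : ∀ c, 0 ≤ P c) (hP1 : ∑ c, P c = 1)
    (m : ℕ) (hm : 2 ≤ m)
    (δ : ℝ) (hδ0 : 0 < δ) (hδ1 : δ ≤ 1) :
    ENNReal.ofReal (1 - δ) ≤
      Measure.pi (fun _ : Fin m => D)
        {S : Fin m → X |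
          ∀ Q : H → ℝ, (∀ c, 0 ≤ Q c) → ∑ c, Q c = 1 →
            klBin
              (∑ c, Q c * (((univ.filter fun i : Fin m => h c (S i) ≠ t (S i)).card : ℝ) / m))
              (∑ c, Q c * (D {x | h c x ≠ t x}).toReal)
            ≤ (klDiv Q P + ((Real.log (2 * m / δ) : ℝ) : EReal)) / (((m : ℝ) - 1 : ℝ) : EReal)} := by
  classical
  have hm1 : 1 ≤ m := by omega
  have hmRpos : (0 : ℝ) < m := by positivity
  have hBmeas : ∀ c, MeasurableSet {x | h c x ≠ t x} := by
    intro c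
    have he : {x | h c x ≠ t x} = (fun x => (h c x, t x)) ⁻¹' {q : Bool × Bool | q.1 ≠ q.2} :=
      rfl
    rw [he]
    exact ((hMeas c).prodMk ht) ((Set.toFinite _).measurableSet)
  set μ := Measure.pi (fun _ : Fin m => D) with hμdef
  haveI hprob : IsProbabilityMeasure μ := by rw [hμdef]; infer_instance
  set pc : H → ℝ := fun c => (D {x | h c x ≠ t x}).toReal with hpcdef
  have hDne : ∀ c, D {x | h c x ≠ t x} ≠ ⊤ := fun c => measure_ne_top D _
  have hpc0 : ∀ c, 0 ≤ pc c := fun c => ENNReal.toReal_nonneg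
  have hpc1 : ∀ c, pc c ≤ 1 := by
    intro c
    rw [hpcdef]
    calc (D {x | h c x ≠ t x}).toReal ≤ (1 : ℝ≥0∞).toReal :=
          ENNReal.toReal_mono ENNReal.one_ne_top prob_le_one
      _ = 1 := by simp
  have hDB : ∀ c, D {x | h c x ≠ t x} = ENNReal.ofReal (pc c) :=
    fun c => (ENNReal.ofReal_toReal (hDne c)).symm
  have hDBc : ∀ c, D {x | h c x ≠ t x}ᶜ = ENNReal.ofReal (1 - pc c) := by
    intro c
    rw [prob_compl_eq_one_sub (hBmeas c), hDB c, ENNReal.ofReal_sub 1 (hpc0 c),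
      ENNReal.ofReal_one]
  have hKmeas : ∀ c, Measurable
      (fun S : Fin m → X => (univ.filter fun i : Fin m => h c (S i) ≠ t (S i)).card) :=
    fun c => card_filter_measurable m (fun x => h c x ≠ t x) (hBmeas c)
  set Y : (Fin m → X) → ℝ := fun S => ∑ c, P c * Real.exp (((m : ℝ) - 1) *
    klR (((univ.filter fun i : Fin m => h c (S i) ≠ t (S i)).card : ℝ) / m) (pc c)) with hYdef
  have hexp_meas : ∀ c, Measurable (fun S : Fin m → X => Real.exp (((m : ℝ) - 1) *
      klR (((univ.filter fun i : Fin m => h c (S i) ≠ t (S i)).card : ℝ) / m) (pc c))) :=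
    fun c => (measurable_from_top
      (f := fun k : ℕ => Real.exp (((m : ℝ) - 1) * klR ((k : ℝ) / m) (pc c)))).comp (hKmeas c)
  have hYmeas : Measurable Y := by
    rw [hYdef]
    exact Finset.measurable_sum _ fun c _ => (hexp_meas c).const_mul (P c)
  set G : Set (Fin m → X) := {S | Y S ≤ 2 * m / δ} with hGdef
  have hGmeas : MeasurableSet G := measurableSet_le hYmeas measurable_const
  have hofYmeas : Measurable fun S => ENNReal.ofReal (Y S) :=
    ENNReal.measurable_ofReal.comp hYmeas
  -- expectation bound
  have hEY : ∫⁻ S, ENNReal.ofReal (Y S) ∂μ ≤ ENNReal.ofReal (2 * m) := by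
    have hperc : ∀ c, (∫⁻ S, ENNReal.ofReal (P c * Real.exp (((m : ℝ) - 1) *
        klR (((univ.filter fun i : Fin m => h c (S i) ≠ t (S i)).card : ℝ) / m) (pc c))) ∂μ)
        ≤ ENNReal.ofReal (P c) * ((m : ℝ≥0∞) + 1) := by
      intro c
      have e1 : ∀ S : Fin m → X, ENNReal.ofReal (P c * Real.exp (((m : ℝ) - 1) *
          klR (((univ.filter fun i : Fin m => h c (S i) ≠ t (S i)).card : ℝ) / m) (pc c))) =
          ENNReal.ofReal (P c) * ENNReal.ofReal (Real.exp (((m : ℝ) - 1) *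
          klR (((univ.filter fun i : Fin m => h c (S i) ≠ t (S i)).card : ℝ) / m) (pc c))) :=
        fun S => ENNReal.ofReal_mul (hP0 c)
      rw [lintegral_congr e1,
        lintegral_const_mul _ (hexp_meas c).ennreal_ofReal]
      refine mul_le_mul_right ?_ _
      have hint := lintegral_card_fun D m (fun x => h c x ≠ t x) (hBmeas c)
        (fun k => ENNReal.ofReal (Real.exp (((m : ℝ) - 1) * klR ((k : ℝ) / m) (pc c))))
      rw [hμdef, hint]
      calc ∑ k ∈ Finset.range (m + 1),
            ENNReal.ofReal (Real.exp (((m : ℝ) - 1) * klR ((k : ℝ) / m) (pc c))) *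
              ((m.choose k : ℝ≥0∞) * D {x | h c x ≠ t x} ^ k *
                D {x | h c x ≠ t x}ᶜ ^ (m - k))
          ≤ ∑ k ∈ Finset.range (m + 1), 1 := by
            refine Finset.sum_le_sum fun k hk => ?_
            have hkm : k ≤ m := by
              have := Finset.mem_range.mp hk; omega
            rw [hDB c, hDBc c, ← ENNReal.ofReal_pow (hpc0 c),
              ← ENNReal.ofReal_pow (by linarith [hpc1 c]),
              ← ENNReal.ofReal_natCast (m.choose k),
              ← ENNReal.ofReal_mul (Nat.cast_nonneg _),
              ← ENNReal.ofReal_mul (mul_nonneg (Nat.cast_nonneg _) (pow_nonneg (hpc0 c) _)),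
              ← ENNReal.ofReal_mul (Real.exp_pos _).le, ← ENNReal.ofReal_one]
            apply ENNReal.ofReal_le_ofReal
            calc Real.exp (((m : ℝ) - 1) * klR ((k : ℝ) / m) (pc c)) *
                  ((m.choose k : ℝ) * pc c ^ k * (1 - pc c) ^ (m - k))
                = (m.choose k : ℝ) * pc c ^ k * (1 - pc c) ^ (m - k) *
                  Real.exp (((m : ℝ) - 1) * klR ((k : ℝ) / m) (pc c)) := by ring
              _ ≤ 1 := chernoff_term hm1 hkm (hpc0 c) (hpc1 c)
        _ = ((m : ℝ≥0∞) + 1) := by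
            rw [Finset.sum_const, Finset.card_range, nsmul_eq_mul, mul_one]
            push_cast
            ring
    have hsplit : ∫⁻ S, ENNReal.ofReal (Y S) ∂μ =
        ∑ c, ∫⁻ S, ENNReal.ofReal (P c * Real.exp (((m : ℝ) - 1) *
          klR (((univ.filter fun i : Fin m => h c (S i) ≠ t (S i)).card : ℝ) / m) (pc c))) ∂μ := by
      rw [lintegral_congr (fun S => ENNReal.ofReal_sum_of_nonneg
        (fun c _ => mul_nonneg (hP0 c) (Real.exp_pos _).le))]
      exact lintegral_finset_sum _ fun c _ =>
        ((hexp_meas c).const_mul (P c)).ennreal_ofReal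
    rw [hsplit]
    calc ∑ c, ∫⁻ S, ENNReal.ofReal (P c * Real.exp (((m : ℝ) - 1) *
          klR (((univ.filter fun i : Fin m => h c (S i) ≠ t (S i)).card : ℝ) / m) (pc c))) ∂μ
        ≤ ∑ c, ENNReal.ofReal (P c) * ((m : ℝ≥0∞) + 1) := Finset.sum_le_sum fun c _ => hperc c
      _ = (∑ c, ENNReal.ofReal (P c)) * ((m : ℝ≥0∞) + 1) := by rw [Finset.sum_mul]
      _ = ((m : ℝ≥0∞) + 1) := by
          rw [← ENNReal.ofReal_sum_of_nonneg (fun c _ => hP0 c), hP1, ENNReal.ofReal_one,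
            one_mul]
      _ ≤ ENNReal.ofReal (2 * m) := by
          have h1 : ((m : ℝ≥0∞) + 1) = ((m + 1 : ℕ) : ℝ≥0∞) := by push_cast; ring
          have h2 : ENNReal.ofReal (2 * m) = ((2 * m : ℕ) : ℝ≥0∞) := by
            rw [← ENNReal.ofReal_natCast (2 * m)]
            congr 1
            push_cast
            ring
          rw [h1, h2]
          exact Nat.cast_le.mpr (by omega)
  -- Markov
  have hGc : μ Gᶜ ≤ ENNReal.ofReal δ := by
    have hsub : Gᶜ ⊆ {S | ENNReal.ofReal (2 * m / δ) ≤ ENNReal.ofReal (Y S)} := by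
      intro S hS
      simp only [hGdef, Set.mem_compl_iff, Set.mem_setOf_eq, not_le] at hS
      exact ENNReal.ofReal_le_ofReal (le_of_lt hS)
    have hmar := mul_meas_ge_le_lintegral (μ := μ) hofYmeas (ENNReal.ofReal (2 * m / δ))
    have hε0 : ENNReal.ofReal (2 * m / δ) ≠ 0 := by
      rw [Ne, ENNReal.ofReal_eq_zero, not_le]
      positivity
    have hεtop : ENNReal.ofReal (2 * m / δ) ≠ ⊤ := ENNReal.ofReal_ne_top
    have hkey : ENNReal.ofReal (2 * m / δ) *
        μ {S | ENNReal.ofReal (2 * m / δ) ≤ ENNReal.ofReal (Y S)} ≤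
        ENNReal.ofReal (2 * m / δ) * ENNReal.ofReal δ := by
      refine le_trans (le_trans hmar hEY) (le_of_eq ?_)
      rw [← ENNReal.ofReal_mul (by positivity)]
      congr 1
      field_simp
    exact le_trans (measure_mono hsub) ((ENNReal.mul_le_mul_iff_right hε0 hεtop).mp hkey)
  -- the a.s. event
  set Ω : Set (Fin m → X) := {S | ∀ c,
      (pc c = 0 → (univ.filter fun i : Fin m => h c (S i) ≠ t (S i)).card = 0) ∧
      (pc c = 1 → (univ.filter fun i : Fin m => h c (S i) ≠ t (S i)).card = m)} with hΩdef
  have hΩc : μ Ωᶜ = 0 := by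
    refine measure_mono_null (t := ⋃ c, {S : Fin m → X | ¬
      ((pc c = 0 → (univ.filter fun i : Fin m => h c (S i) ≠ t (S i)).card = 0) ∧
       (pc c = 1 → (univ.filter fun i : Fin m => h c (S i) ≠ t (S i)).card = m))}) ?_
      (measure_iUnion_null fun c => ?_)
    · intro S hS
      simp only [hΩdef, Set.mem_compl_iff, Set.mem_setOf_eq, not_forall] at hS
      obtain ⟨c, hc⟩ := hS
      exact Set.mem_iUnion.mpr ⟨c, hc⟩
    · by_cases h0 : pc c = 0
      · have hDB0 : D {x | h c x ≠ t x} = 0 := by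
          rw [hDB c, h0]; simp
        rw [hμdef]
        refine measure_mono_null ?_ (eval_preimage_null D m hDB0)
        intro S hS
        simp only [Set.mem_setOf_eq] at hS ⊢
        have hB : pc c = 1 → (univ.filter fun i : Fin m => h c (S i) ≠ t (S i)).card = m :=
          fun h1 => absurd (h0.symm.trans h1) (by norm_num)
        have hKne : (univ.filter fun i : Fin m => h c (S i) ≠ t (S i)).card ≠ 0 :=
          fun hK => hS ⟨fun _ => hK, hB⟩
        obtain ⟨i, hi⟩ := Finset.card_pos.mp (Nat.pos_of_ne_zero hKne)
        exact ⟨i, (Finset.mem_filter.mp hi).2⟩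
      · by_cases h1 : pc c = 1
        · have hDBc0 : D {x | h c x ≠ t x}ᶜ = 0 := by
            rw [hDBc c, h1]; simp
          rw [hμdef]
          refine measure_mono_null ?_ (eval_preimage_null D m hDBc0)
          intro S hS
          simp only [Set.mem_setOf_eq] at hS ⊢
          have hA : pc c = 0 → (univ.filter fun i : Fin m => h c (S i) ≠ t (S i)).card = 0 :=
            fun h0' => absurd (h1.symm.trans h0') (by norm_num)
          have hKne : (univ.filter fun i : Fin m => h c (S i) ≠ t (S i)).card ≠ m :=
            fun hK => hS ⟨hA, fun _ => hK⟩
          by_contra hno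
          push_neg at hno
          apply hKne
          have hall : ∀ i : Fin m, h c (S i) ≠ t (S i) := by
            intro i
            by_contra hcon
            exact hno i (fun hne => hne hcon)
          rw [Finset.filter_true_of_mem (fun i _ => hall i), Finset.card_univ,
            Fintype.card_fin]
        · refine measure_mono_null (t := (∅ : Set (Fin m → X))) ?_ measure_empty
          intro S hS
          exact absurd ⟨fun hc => absurd hc h0, fun hc => absurd hc h1⟩ hS
  -- assembling
  have hfinal : G ∩ Ω ⊆ {S : Fin m → X |
      ∀ Q : H → ℝ, (∀ c, 0 ≤ Q c) → ∑ c, Q c = 1 →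
        klBin
          (∑ c, Q c * (((univ.filter fun i : Fin m => h c (S i) ≠ t (S i)).card : ℝ) / m))
          (∑ c, Q c * (D {x | h c x ≠ t x}).toReal)
        ≤ (klDiv Q P + ((Real.log (2 * m / δ) : ℝ) : EReal)) /
          (((m : ℝ) - 1 : ℝ) : EReal)} := by
    rintro S ⟨hSG, hSΩ⟩
    intro Q hQ0 hQ1
    exact main_bound P Q pc
      (fun c => (univ.filter fun i : Fin m => h c (S i) ≠ t (S i)).card)
      m hm δ hδ0 hδ1 hP0 hP1 hQ0 hQ1 hpc0 hpc1
      (fun c => by simpa using Finset.card_filter_le univ (fun i : Fin m => h c (S i) ≠ t (S i)))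
      (fun c hc => (hSΩ c).1 hc) (fun c hc => (hSΩ c).2 hc) hSG
  have hG_lb : ENNReal.ofReal (1 - δ) ≤ μ G := by
    have hsum : μ G + μ Gᶜ = 1 := by
      have := measure_add_measure_compl (μ := μ) hGmeas
      rwa [measure_univ] at this
    have h1 : ENNReal.ofReal (1 - δ) + ENNReal.ofReal δ ≤ μ G + ENNReal.ofReal δ := by
      rw [← ENNReal.ofReal_add (by linarith) hδ0.le]
      have : (1 - δ) + δ = 1 := by ring
      rw [this, ENNReal.ofReal_one, ← hsum]
      exact add_le_add_right hGc _
    exact (ENNReal.add_le_add_iff_right ENNReal.ofReal_ne_top).mp h1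
  have hGΩ : μ G ≤ μ (G ∩ Ω) := by
    have hdecomp : G = (G ∩ Ω) ∪ (G ∩ Ωᶜ) := by
      rw [← Set.inter_union_distrib_left, Set.union_compl_self, Set.inter_univ]
    calc μ G = μ ((G ∩ Ω) ∪ (G ∩ Ωᶜ)) := by rw [← hdecomp]
      _ ≤ μ (G ∩ Ω) + μ (G ∩ Ωᶜ) := measure_union_le _ _
      _ ≤ μ (G ∩ Ω) + μ Ωᶜ := add_le_add_right (measure_mono Set.inter_subset_right) _
      _ = μ (G ∩ Ω) := by rw [hΩc, add_zero]
  exact le_trans hG_lb (le_trans hGΩ (measure_mono hfinal))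
end

section
/- Realizable PAC-Bayes theorem for the Bayesian classifier: For any probability distribution P on a finite concept space H, any probability distribution D on the instance space X, any integer m ≥ 2, and any 0 < δ ≤ 1, assume realizability, i.e. the target concept t belongs to H and P(t) > 0 (so that for every sample S the consistent set U is nonempty and P(U) > 0). Then with probability at least 1 − δ over the choice of an i.i.d. sample S of m instances drawn from D, the Bayesian posterior Q* satisfies −ln(1 − ε(Q*)) ≤ (ln(1/P(U)) + ln(2m/δ))/(m − 1). -/
open MeasureTheory Finset

/-- **Realizable PAC-Bayes theorem for the Bayesian classifier.** Assume the target concept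
`t` is realized by some `c₀ ∈ H` with prior weight `P c₀ > 0`. Then with probability at least
`1 - δ` over an i.i.d. sample `S` of size `m ≥ 2` from `D`, the Bayesian posterior `Q*`
(the prior `P` conditioned on the set `U` of concepts consistent with `S`) satisfies
`-ln(1 - ε(Q*)) ≤ (ln(1/P(U)) + ln(2m/δ)) / (m - 1)`, where the left-hand side is `⊤` when
`ε(Q*) = 1`. -/
theorem pac_bayes_realizable
    {X : Type*} [MeasurableSpace X] (D : Measure X) [IsProbabilityMeasure D]
    {H : Type*} [Fintype H] [DecidableEq H]
    (h : H → X → Bool) (hMeas : ∀ c, Measurable (h c))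
    (t : X → Bool) (ht : Measurable t)
    (c₀ : H) (hc₀ : h c₀ = t)
    (P : H → ℝ) (hP0 : ∀ c, 0 ≤ P c) (hP1 : ∑ c, P c = 1) (hreal : 0 < P c₀)
    (m : ℕ) (hm : 2 ≤ m)
    (δ : ℝ) (hδ0 : 0 < δ) (hδ1 : δ ≤ 1) :
    ENNReal.ofReal (1 - δ) ≤
      Measure.pi (fun _ : Fin m => D)
        {S : Fin m → X |
          -- the set of concepts consistent with the sample `S`
          let U : Finset H := univ.filter fun c => ∀ i : Fin m, h c (S i) = t (S i)
          -- its total prior probability (the marginal likelihood of the data)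
          let PU : ℝ := ∑ c ∈ U, P c
          -- the Bayesian posterior
          let Qstar : H → ℝ := fun c => if c ∈ U then P c / PU else 0
          -- its expected generalization error
          let eps : ℝ := ∑ c, Qstar c * (D {x | h c x ≠ t x}).toReal
          (if eps = 1 then (⊤ : EReal) else ((-Real.log (1 - eps) : ℝ) : EReal))
            ≤ (((Real.log (1 / PU) + Real.log (2 * m / δ)) / ((m : ℝ) - 1) : ℝ) : EReal)} := by
  classical
  set μ : Measure (Fin m → X) := Measure.pi (fun _ : Fin m => D) with hμdef
  have hμprob : IsProbabilityMeasure μ := by infer_instance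
  -- basic objects
  set A : H → Set X := fun c => {x | h c x = t x} with hAdef
  have hA : ∀ c, MeasurableSet (A c) := by
    intro c
    have : A c = ((h c ⁻¹' {true}) ∩ (t ⁻¹' {true})) ∪ ((h c ⁻¹' {false}) ∩ (t ⁻¹' {false})) := by
      ext x
      simp only [hAdef, Set.mem_setOf_eq, Set.mem_union, Set.mem_inter_iff, Set.mem_preimage,
        Set.mem_singleton_iff]
      cases hb : h c x <;> cases hb' : t x <;> simp
    rw [this]
    exact (((hMeas c) (measurableSet_singleton true)).inter (ht (measurableSet_singleton true))).union
      (((hMeas c) (measurableSet_singleton false)).inter (ht (measurableSet_singleton false)))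
  set p : H → ℝ := fun c => (D (A c)).toReal with hpdef
  have hp0 : ∀ c, 0 ≤ p c := fun c => ENNReal.toReal_nonneg
  have hp1 : ∀ c, p c ≤ 1 := fun c => by
    simpa [hpdef] using ENNReal.toReal_le_of_le_ofReal zero_le_one (by simpa using prob_le_one (μ := D) (s := A c))
  set C : H → Set (Fin m → X) := fun c => Set.pi Set.univ (fun _ : Fin m => A c) with hCdef
  have hC : ∀ c, MeasurableSet (C c) := fun c => MeasurableSet.univ_pi (fun _ => hA c)
  have hμC : ∀ c, μ (C c) = (D (A c)) ^ m := by
    intro c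
    rw [hμdef, hCdef]
    simp [Measure.pi_pi]
  set n : ℤ := -((m : ℤ) - 1) with hndef
  have hn0 : n ≠ 0 := by omega
  have hn1 : n ≠ 1 := by omega
  set w : H → ℝ := fun c => p c ^ n with hwdef
  have hw0 : ∀ c, 0 ≤ w c := fun c => zpow_nonneg (hp0 c) n
  set Z : (Fin m → X) → ℝ := fun S => ∑ c, (C c).indicator (fun _ => P c * w c) S with hZdef
  have hZmeas : Measurable Z := by
    apply Finset.measurable_sum
    intro c _
    exact measurable_const.indicator (hC c)
  have hZint : Integrable Z μ := by
    apply integrable_finset_sum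
    intro c _
    exact (integrable_const _).indicator (hC c)
  have hZnn : ∀ S, 0 ≤ Z S := by
    intro S
    apply Finset.sum_nonneg
    intro c _
    exact Set.indicator_nonneg (fun _ _ => mul_nonneg (hP0 c) (hw0 c)) S
  -- expected value of Z is at most 1
  have hEZ : ∫ S, Z S ∂μ ≤ 1 := by
    have h1 : ∫ S, Z S ∂μ = ∑ c, P c * w c * p c ^ m := by
      rw [hZdef]
      rw [integral_finset_sum _ (fun c _ => (integrable_const _).indicator (hC c))]
      apply Finset.sum_congr rfl
      intro c _
      rw [integral_indicator_const _ (hC c), measureReal_def, hμC c, ENNReal.toReal_pow]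
      simp [hpdef, mul_comm]
    rw [h1, ← hP1]
    apply Finset.sum_le_sum
    intro c _
    rcases eq_or_lt_of_le (hp0 c) with hp | hp
    · have hw : w c = 0 := by simp [hwdef, ← hp, zero_zpow n hn0]
      rw [hw]
      simpa using hP0 c
    · have key : w c * p c ^ m = p c := by
        rw [hwdef, ← zpow_natCast (p c) m, ← zpow_add₀ (ne_of_gt hp),
          show n + (m : ℤ) = 1 by omega, zpow_one]
      calc P c * w c * p c ^ m = P c * (w c * p c ^ m) := by ring
        _ = P c * p c := by rw [key]
        _ ≤ P c * 1 := mul_le_mul_of_nonneg_left (hp1 c) (hP0 c)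
        _ = P c := mul_one _
  -- Markov's inequality
  have hMarkov : μ {S | 1/δ ≤ Z S} ≤ ENNReal.ofReal δ := by
    have hM := mul_meas_ge_le_integral_of_nonneg (ae_of_all μ hZnn) hZint (1/δ)
    have hM2 : (μ {S | 1/δ ≤ Z S}).toReal ≤ δ := by
      have hx := hM.trans hEZ
      rw [div_mul_eq_mul_div, one_mul, div_le_one hδ0] at hx
      exact hx
    calc μ {S | 1/δ ≤ Z S} = ENNReal.ofReal (μ {S | 1/δ ≤ Z S}).toReal :=
          (ENNReal.ofReal_toReal (measure_ne_top μ _)).symm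
      _ ≤ ENNReal.ofReal δ := ENNReal.ofReal_le_ofReal hM2
  set G1 : Set (Fin m → X) := {S | Z S ≤ 1/δ} with hG1def
  have hG1meas : MeasurableSet G1 := measurableSet_le hZmeas measurable_const
  have hG1 : ENNReal.ofReal (1 - δ) ≤ μ G1 := by
    have hcompl : μ G1ᶜ ≤ ENNReal.ofReal δ := by
      refine le_trans (measure_mono ?_) hMarkov
      intro S hS
      simp only [hG1def, Set.mem_compl_iff, Set.mem_setOf_eq, not_le] at hS
      exact le_of_lt hS
    have h2 : μ G1 = 1 - μ G1ᶜ := by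
      have h3 := prob_compl_eq_one_sub (μ := μ) hG1meas.compl
      rw [compl_compl] at h3
      exact h3
    rw [h2]
    calc ENNReal.ofReal (1 - δ) = 1 - ENNReal.ofReal δ := by
          rw [ENNReal.ofReal_sub _ (le_of_lt hδ0), ENNReal.ofReal_one]
      _ ≤ 1 - μ G1ᶜ := tsub_le_tsub_left hcompl 1
  set G2 : Set (Fin m → X) := {S | ∀ c, D (A c) = 0 → S ∉ C c} with hG2def
  have hG2null : μ G2ᶜ = 0 := by
    have hsub : G2ᶜ ⊆ ⋃ c, {S | D (A c) = 0 ∧ S ∈ C c} := by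
      intro S hS
      simp only [hG2def, Set.mem_compl_iff, Set.mem_setOf_eq, not_forall, not_not] at hS
      obtain ⟨c, hc1, hc2⟩ := hS
      exact Set.mem_iUnion.2 ⟨c, hc1, hc2⟩
    refine measure_mono_null hsub (measure_iUnion_null fun c => ?_)
    by_cases hc : D (A c) = 0
    · refine measure_mono_null (fun S hS => hS.2) ?_
      rw [hμC c, hc]
      exact zero_pow (by omega)
    · have : {S | D (A c) = 0 ∧ S ∈ C c} = ∅ := by
        ext S; simp [hc]
      simp [this]
  have hGG : μ (G1 ∩ G2) = μ G1 := by
    apply measure_inter_conull'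
    exact measure_mono_null (fun S hS => hS.2) hG2null
  refine le_trans (hG1.trans_eq hGG.symm) (measure_mono ?_)
  -- pointwise argument
  intro S hS
  obtain ⟨hZle0, hG2S0⟩ := hS
  have hZle : Z S ≤ 1/δ := hZle0
  have hG2S : ∀ c, D (A c) = 0 → S ∉ C c := hG2S0
  rw [Set.mem_setOf_eq]
  intro U PU Qstar eps
  have hUdef : U = univ.filter (fun c => ∀ i : Fin m, h c (S i) = t (S i)) := rfl
  have hPUdef : PU = ∑ c ∈ U, P c := rfl
  have hQdef : Qstar = fun c => if c ∈ U then P c / PU else 0 := rfl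
  have hepsdef : eps = ∑ c, Qstar c * (D {x | h c x ≠ t x}).toReal := rfl
  have hUC : ∀ c, c ∈ U ↔ S ∈ C c := by
    intro c
    rw [hUdef]
    simp [hCdef, Set.mem_univ_pi, hAdef, Set.mem_setOf_eq]
  have hc₀U : c₀ ∈ U := by
    rw [hUdef]
    simp [hc₀]
  have hPU : 0 < PU :=
    lt_of_lt_of_le hreal (by rw [hPUdef]; exact Finset.single_le_sum (fun c _ => hP0 c) hc₀U)
  have hQ0 : ∀ c, 0 ≤ Qstar c := by
    intro c
    rw [hQdef]
    dsimp only
    split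
    · exact div_nonneg (hP0 c) hPU.le
    · exact le_refl 0
  have hQsum : ∑ c ∈ U, Qstar c = 1 := by
    have h1 : ∑ c ∈ U, Qstar c = (∑ c ∈ U, P c) / PU := by
      rw [Finset.sum_div]
      refine Finset.sum_congr rfl fun c hcU => ?_
      rw [hQdef]
      simp [hcU]
    rw [h1, ← hPUdef, div_self hPU.ne']
  have herr : ∀ c, (D {x | h c x ≠ t x}).toReal = 1 - p c := by
    intro c
    have hcompl : {x | h c x ≠ t x} = (A c)ᶜ := rfl
    rw [hcompl, measure_compl (hA c) (measure_ne_top D _), measure_univ,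
      ENNReal.toReal_sub_of_le prob_le_one ENNReal.one_ne_top, ENNReal.toReal_one]
  set q : ℝ := ∑ c ∈ U, Qstar c * p c with hqdef
  have heps : eps = 1 - q := by
    rw [hepsdef]
    have h1 : ∑ c, Qstar c * (D {x | h c x ≠ t x}).toReal
        = ∑ c ∈ U, Qstar c * (1 - p c) := by
      rw [← Finset.sum_subset (Finset.subset_univ U) (fun c _ hcU => by rw [hQdef]; simp [hcU])]
      exact Finset.sum_congr rfl fun c _ => by rw [herr c]
    rw [h1]
    simp only [mul_sub, mul_one]
    rw [Finset.sum_sub_distrib, hQsum, hqdef]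
  have hpc₀ : p c₀ = 1 := by
    have : A c₀ = Set.univ := by
      ext x
      simp [hAdef, hc₀]
    simp [hpdef, this]
  have hqpos : 0 < q := by
    have hterm : 0 < Qstar c₀ * p c₀ := by
      rw [hQdef, hpc₀]
      simp [hc₀U]
      exact div_pos hreal hPU
    exact lt_of_lt_of_le hterm
      (Finset.single_le_sum (fun c _ => mul_nonneg (hQ0 c) (hp0 c)) hc₀U)
  have heps1 : eps ≠ 1 := by
    rw [heps]
    intro hcon
    linarith
  have hposU : ∀ c ∈ U, p c ∈ Set.Ioi (0:ℝ) := by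
    intro c hcU
    have hSC := (hUC c).1 hcU
    have hne : D (A c) ≠ 0 := fun h0 => hG2S c h0 hSC
    exact ENNReal.toReal_pos hne (measure_ne_top D _)
  have hconv : ConvexOn ℝ (Set.Ioi (0:ℝ)) (fun x : ℝ => x ^ n) :=
    (strictConvexOn_zpow hn0 hn1).convexOn
  have hjen := hconv.map_sum_le (fun c _ => hQ0 c) hQsum hposU
  simp only [smul_eq_mul] at hjen
  -- hjen : q ^ n ≤ ∑ c ∈ U, Qstar c * p c ^ n
  have hZS : Z S = ∑ c ∈ U, P c * w c := by
    have h1 : Z S = ∑ c, if c ∈ U then P c * w c else 0 := by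
      refine Finset.sum_congr rfl fun c _ => ?_
      rw [Set.indicator_apply]
      exact if_congr ((hUC c).symm) rfl rfl
    rw [h1, Finset.sum_ite_mem, Finset.univ_inter]
  have h2 : ∑ c ∈ U, Qstar c * p c ^ n = Z S / PU := by
    rw [hZS, Finset.sum_div]
    refine Finset.sum_congr rfl fun c hcU => ?_
    rw [hQdef, hwdef]
    simp only [hcU, if_true]
    ring
  have hqZ : q ^ n ≤ 1 / (δ * PU) := by
    have h3 : Z S / PU ≤ (1/δ) / PU := by
      exact (div_le_div_iff_of_pos_right hPU).2 hZle
    calc q ^ n ≤ Z S / PU := by rw [← h2]; exact hjen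
      _ ≤ (1/δ) / PU := h3
      _ = 1 / (δ * PU) := by rw [div_div]
  have hqn_pos : 0 < q ^ n := zpow_pos hqpos n
  have hlog : Real.log (q ^ n) ≤ Real.log (1/(δ*PU)) := Real.log_le_log hqn_pos hqZ
  rw [Real.log_zpow] at hlog
  have hrhs : Real.log (1/(δ*PU)) = -(Real.log δ + Real.log PU) := by
    rw [one_div, Real.log_inv, Real.log_mul hδ0.ne' hPU.ne']
  have hncast : ((n : ℤ) : ℝ) = -((m:ℝ) - 1) := by
    rw [hndef]
    push_cast
    ring
  have hlog2 : -((m:ℝ) - 1) * Real.log q ≤ -(Real.log δ + Real.log PU) := by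
    rw [← hncast]
    exact hlog.trans_eq hrhs
  have h1PU : Real.log (1/PU) = - Real.log PU := by rw [one_div, Real.log_inv]
  have hlogδ : - Real.log δ ≤ Real.log (2 * m / δ) := by
    have h4 : (1:ℝ)/δ ≤ 2 * m / δ := by
      apply (div_le_div_iff_of_pos_right hδ0).2
      have : (2:ℝ) ≤ (m:ℝ) := by exact_mod_cast hm
      linarith
    have h5 := Real.log_le_log (by positivity) h4
    rwa [one_div, Real.log_inv] at h5
  have hm1 : (0:ℝ) < (m:ℝ) - 1 := by
    have : (2:ℝ) ≤ (m:ℝ) := by exact_mod_cast hm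
    linarith
  rw [if_neg heps1]
  rw [EReal.coe_le_coe_iff]
  rw [heps]
  have : 1 - (1 - q) = q := by ring
  rw [this]
  rw [le_div_iff₀ hm1]
  nlinarith [hlog2, hlogδ, h1PU]
end

section
/- Inverted (explicit) form of the realizable PAC-Bayes bound: For any probability distribution P on a finite concept space H, any probability distribution D on the instance space X, any integer m ≥ 2, and any 0 < δ ≤ 1, assume realizability, i.e. the target concept t belongs to H and P(t) > 0. Then with probability at least 1 − δ over the choice of an i.i.d. sample S of m instances drawn from D, the Bayesian posterior Q* satisfies ε(Q*) ≤ 1 − exp(−(ln(1/P(U)) + ln(2m/δ))/(m − 1)). -/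
open MeasureTheory Finset

/-- **Inverted (explicit) form of the realizable PAC-Bayes bound.** Assume the target
concept `t` is realized by some `c₀ ∈ H` with prior weight `P c₀ > 0`. Then with probability
at least `1 - δ` over an i.i.d. sample `S` of size `m ≥ 2` from `D`, the Bayesian posterior
`Q*` satisfies `ε(Q*) ≤ 1 - exp(-(ln(1/P(U)) + ln(2m/δ)) / (m - 1))`. -/
theorem pac_bayes_realizable_inverted
    {X : Type*} [MeasurableSpace X] (D : Measure X) [IsProbabilityMeasure D]
    {H : Type*} [Fintype H] [DecidableEq H]
    (h : H → X → Bool) (hMeas : ∀ c, Measurable (h c))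
    (t : X → Bool) (ht : Measurable t)
    (c₀ : H) (hc₀ : h c₀ = t)
    (P : H → ℝ) (hP0 : ∀ c, 0 ≤ P c) (hP1 : ∑ c, P c = 1) (hreal : 0 < P c₀)
    (m : ℕ) (hm : 2 ≤ m)
    (δ : ℝ) (hδ0 : 0 < δ) (hδ1 : δ ≤ 1) :
    ENNReal.ofReal (1 - δ) ≤
      Measure.pi (fun _ : Fin m => D)
        {S : Fin m → X |
          -- the set of concepts consistent with the sample `S`
          let U : Finset H := univ.filter fun c => ∀ i : Fin m, h c (S i) = t (S i)
          -- its total prior probability (the marginal likelihood of the data)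
          let PU : ℝ := ∑ c ∈ U, P c
          -- the Bayesian posterior
          let Qstar : H → ℝ := fun c => if c ∈ U then P c / PU else 0
          -- its expected generalization error
          let eps : ℝ := ∑ c, Qstar c * (D {x | h c x ≠ t x}).toReal
          eps ≤ 1 - Real.exp (-((Real.log (1 / PU) + Real.log (2 * m / δ)) / ((m : ℝ) - 1)))} := by
  classical
  set μ : Measure (Fin m → X) := Measure.pi (fun _ : Fin m => D) with hμdef
  set n : ℕ := m - 1 with hndef
  have hn1 : 1 ≤ n := by omega
  have hnm : n + 1 = m := by omega
  -- error rates and agreement sets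
  set ε : H → ℝ := fun c => (D {x | h c x ≠ t x}).toReal with hεdef
  set A : H → Set X := fun c => {x | h c x = t x} with hAdef
  have hA_meas : ∀ c, MeasurableSet (A c) :=
    fun c => measurableSet_eq_fun (hMeas c) ht
  have hAcompl : ∀ c, (A c)ᶜ = {x | h c x ≠ t x} := fun c => rfl
  have hDA_ne_top : ∀ c, D (A c) ≠ ⊤ := fun c => measure_ne_top D _
  have hDA : ∀ c, (D (A c)).toReal = 1 - ε c := by
    intro c
    have h1 : D ((A c)ᶜ) = 1 - D (A c) := by
      rw [measure_compl (hA_meas c) (hDA_ne_top c), measure_univ]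
    have h2 : ε c = (1 - D (A c)).toReal := by
      rw [hεdef]; simp only [← hAcompl, h1]
    rw [h2, ENNReal.toReal_sub_of_le prob_le_one ENNReal.one_ne_top, ENNReal.toReal_one]
    ring
  have hε01 : ∀ c, 0 ≤ ε c ∧ ε c ≤ 1 := by
    intro c
    refine ⟨ENNReal.toReal_nonneg, ?_⟩
    have := hDA c
    have : (0:ℝ) ≤ (D (A c)).toReal := ENNReal.toReal_nonneg
    linarith [hDA c]
  -- the "consistent with sample" events
  set Cons : H → Set (Fin m → X) := fun c => {S | ∀ i, h c (S i) = t (S i)} with hConsdef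
  have hCons_eq : ∀ c, Cons c = Set.pi Set.univ (fun _ : Fin m => A c) := by
    intro c; ext S; simp [hConsdef, hAdef, Set.mem_pi]
  have hCons_meas : ∀ c, MeasurableSet (Cons c) := by
    intro c; rw [hCons_eq c]
    exact MeasurableSet.univ_pi fun _ => hA_meas c
  have hμCons : ∀ c, μ (Cons c) = (D (A c)) ^ m := by
    intro c
    rw [hCons_eq c, hμdef, Measure.pi_pi]
    simp
  -- the key random variable
  set q : H → ℝ := fun c => ((1 - ε c)⁻¹) ^ n with hqdef
  have hq0 : ∀ c, 0 ≤ q c := by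
    intro c
    exact pow_nonneg (inv_nonneg.mpr (by linarith [(hε01 c).2])) n
  set Ze : (Fin m → X) → ENNReal :=
    fun S => ∑ c, (Cons c).indicator (fun _ => ENNReal.ofReal (P c * q c)) S with hZedef
  have hZe_meas : Measurable Ze := by
    apply Finset.measurable_sum
    intro c _
    exact measurable_const.indicator (hCons_meas c)
  -- expectation bound
  have hZe_int : ∫⁻ S, Ze S ∂μ ≤ 1 := by
    rw [hZedef]
    rw [lintegral_finset_sum _ (fun c _ => measurable_const.indicator (hCons_meas c))]
    have hterm : ∀ c : H, ∫⁻ S, (Cons c).indicator (fun _ => ENNReal.ofReal (P c * q c)) S ∂μ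
        ≤ ENNReal.ofReal (P c) := by
      intro c
      rw [lintegral_indicator_const (hCons_meas c), hμCons c]
      rcases eq_or_ne (D (A c)) 0 with h0 | h0
      · have hz : (1 : ℝ) - ε c = 0 := by rw [← hDA c, h0]; simp
        have hq : q c = 0 := by
          rw [show q c = ((1 - ε c)⁻¹ : ℝ) ^ n from rfl, hz, inv_zero]
          exact zero_pow (by omega)
        simp [hq]
      · have hx : (0:ℝ) < (D (A c)).toReal := ENNReal.toReal_pos h0 (hDA_ne_top c)
        have hq_eq : ENNReal.ofReal (P c * q c)
            = ENNReal.ofReal (P c) * ((D (A c))⁻¹) ^ n := by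
          rw [ENNReal.ofReal_mul (hP0 c)]
          rw [show q c = ((1 - ε c)⁻¹ : ℝ) ^ n from rfl, show (1:ℝ) - ε c = (D (A c)).toReal from (hDA c).symm]
          rw [ENNReal.ofReal_pow (inv_nonneg.mpr ENNReal.toReal_nonneg),
            ENNReal.ofReal_inv_of_pos hx, ENNReal.ofReal_toReal (hDA_ne_top c)]
        rw [hq_eq, mul_assoc]
        have : ((D (A c))⁻¹) ^ n * (D (A c)) ^ m = D (A c) := by
          rw [← hnm, pow_succ, ← mul_assoc, ← ENNReal.inv_pow,
            ENNReal.inv_mul_cancel (pow_ne_zero n h0) (ENNReal.pow_ne_top (hDA_ne_top c)),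
            one_mul]
        rw [this]
        calc ENNReal.ofReal (P c) * D (A c) ≤ ENNReal.ofReal (P c) * 1 := by
              gcongr; exact prob_le_one
          _ = ENNReal.ofReal (P c) := mul_one _
    calc ∑ c, ∫⁻ S, (Cons c).indicator (fun _ => ENNReal.ofReal (P c * q c)) S ∂μ
        ≤ ∑ c, ENNReal.ofReal (P c) := Finset.sum_le_sum fun c _ => hterm c
      _ = ENNReal.ofReal (∑ c, P c) := (ENNReal.ofReal_sum_of_nonneg fun c _ => hP0 c).symm
      _ = 1 := by rw [hP1, ENNReal.ofReal_one]
  -- Markov's inequality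
  set a : ENNReal := ENNReal.ofReal δ⁻¹ with hadef
  have ha_ne0 : a ≠ 0 := by
    rw [hadef]; simp [ENNReal.ofReal_eq_zero]; positivity
  have hMarkov : μ {S | a ≤ Ze S} ≤ ENNReal.ofReal δ := by
    have h1 := mul_meas_ge_le_lintegral₀ hZe_meas.aemeasurable a (μ := μ)
    have h2 : a * μ {S | a ≤ Ze S} ≤ 1 := le_trans h1 hZe_int
    have h3 : μ {S | a ≤ Ze S} ≤ a⁻¹ := by
      rw [ENNReal.le_inv_iff_mul_le, mul_comm]; exact h2
    calc μ {S | a ≤ Ze S} ≤ a⁻¹ := h3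
      _ = ENNReal.ofReal δ := by
          rw [hadef, ENNReal.ofReal_inv_of_pos hδ0, inv_inv]
  -- null set of "consistent but error-1" samples
  set Bad2 : Set (Fin m → X) := ⋃ c ∈ {c : H | D (A c) = 0}, Cons c with hBad2def
  have hBad2 : μ Bad2 = 0 := by
    rw [hBad2def]
    refine (measure_biUnion_null_iff (Set.to_countable _)).2 fun c hc => ?_
    rw [hμCons c, Set.mem_setOf_eq.mp hc]
    simp; omega
  -- the good event
  set G : Set (Fin m → X) := {S | Ze S < a} ∩ Bad2ᶜ with hGdef
  have hGc : μ Gᶜ ≤ ENNReal.ofReal δ := by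
    have : Gᶜ = {S | Ze S < a}ᶜ ∪ Bad2 := by rw [hGdef, Set.compl_inter, compl_compl]
    rw [this]
    calc μ ({S | Ze S < a}ᶜ ∪ Bad2) ≤ μ {S | Ze S < a}ᶜ + μ Bad2 := measure_union_le _ _
      _ = μ {S | a ≤ Ze S} + 0 := by
          rw [hBad2, show {S | Ze S < a}ᶜ = {S | a ≤ Ze S} from by ext S; simp [not_lt]]
      _ ≤ ENNReal.ofReal δ := by rw [add_zero]; exact hMarkov
  have hG_lb : ENNReal.ofReal (1 - δ) ≤ μ G := by
    have h1 : (1:ENNReal) ≤ μ G + μ Gᶜ := by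
      calc (1:ENNReal) = μ Set.univ := (measure_univ).symm
        _ = μ (G ∪ Gᶜ) := by rw [Set.union_compl_self]
        _ ≤ μ G + μ Gᶜ := measure_union_le _ _
    have h2 : (1:ENNReal) - μ Gᶜ ≤ μ G := by
      rw [tsub_le_iff_right]; exact le_trans h1 (by rw [add_comm])
    calc ENNReal.ofReal (1 - δ) = ENNReal.ofReal 1 - ENNReal.ofReal δ :=
          ENNReal.ofReal_sub 1 hδ0.le
      _ = 1 - ENNReal.ofReal δ := by rw [ENNReal.ofReal_one]
      _ ≤ 1 - μ Gᶜ := tsub_le_tsub_left hGc 1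
      _ ≤ μ G := h2
  -- pointwise argument on the good event
  refine le_trans hG_lb (measure_mono ?_)
  intro S hS
  obtain ⟨hSZ, hSB⟩ := hS
  simp only [Set.mem_setOf_eq] at hSZ
  -- unfold the lets
  rw [Set.mem_setOf_eq]
  intro U PU Qstar eps
  have hU_mem : ∀ c : H, c ∈ U ↔ S ∈ Cons c := by
    intro c; simp [U, hConsdef]
  -- consistent hypotheses have error < 1
  have hzpos : ∀ c ∈ U, 0 < 1 - ε c := by
    intro c hc
    have hSc : S ∈ Cons c := (hU_mem c).1 hc
    have h0 : D (A c) ≠ 0 := by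
      intro h0
      exact hSB (Set.mem_biUnion (Set.mem_setOf_eq.mpr h0) hSc)
    have := ENNReal.toReal_pos h0 (hDA_ne_top c)
    rw [hDA c] at this
    exact this
  have hc₀U : c₀ ∈ U := by
    rw [hU_mem]; intro i; rw [hc₀]
  have hPU_pos : 0 < PU := by
    have : P c₀ ≤ PU := Finset.single_le_sum (fun c _ => hP0 c) hc₀U
    linarith
  -- evaluate Ze S
  have hZeS : Ze S = ENNReal.ofReal (∑ c ∈ U, P c * q c) := by
    show (∑ c, (Cons c).indicator (fun _ => ENNReal.ofReal (P c * q c)) S)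
        = ENNReal.ofReal (∑ c ∈ U, P c * q c)
    rw [ENNReal.ofReal_sum_of_nonneg (s := U) (f := fun c => P c * q c) (fun c _ => mul_nonneg (hP0 c) (hq0 c))]
    rw [← Finset.sum_filter_add_sum_filter_not univ (fun c => c ∈ U)]
    have h2 : ∀ c ∈ univ.filter (fun c => c ∉ U),
        (Cons c).indicator (fun _ => ENNReal.ofReal (P c * q c)) S = 0 := by
      intro c hc
      rw [Finset.mem_filter] at hc
      rw [Set.indicator_of_notMem (fun hmem => hc.2 ((hU_mem c).2 hmem))]
    rw [Finset.sum_congr rfl h2, Finset.sum_const_zero, add_zero]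
    have h3 : univ.filter (fun c => c ∈ U) = U := by
      ext c; simp
    rw [h3]
    refine Finset.sum_congr rfl fun c hc => ?_
    rw [Set.indicator_of_mem ((hU_mem c).1 hc)]
  have hZr_lt : (∑ c ∈ U, P c * q c) < δ⁻¹ := by
    rw [hZeS, hadef] at hSZ
    exact (ENNReal.ofReal_lt_ofReal_iff (by positivity)).1 hSZ
  -- Jensen
  set w : H → ℝ := fun c => P c / PU with hwdef
  have hw0 : ∀ c ∈ U, 0 ≤ w c := fun c _ => div_nonneg (hP0 c) hPU_pos.le
  have hw1 : ∑ c ∈ U, w c = 1 := by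
    rw [hwdef, ← Finset.sum_div, div_self hPU_pos.ne']
  have hz_mem : ∀ c ∈ U, (1 - ε c) ∈ Set.Ioi (0:ℝ) := fun c hc => hzpos c hc
  have hJensen := (convexOn_zpow (𝕜 := ℝ) (-(n:ℤ))).map_sum_le hw0 hw1 hz_mem
  simp only [smul_eq_mul] at hJensen
  set y : ℝ := ∑ c ∈ U, w c * (1 - ε c) with hydef
  have hy_pos : 0 < y := by
    rw [hydef]
    refine Finset.sum_pos' (fun c hc => mul_nonneg (hw0 c hc) (hzpos c hc).le) ⟨c₀, hc₀U, ?_⟩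
    exact mul_pos (div_pos hreal hPU_pos) (hzpos c₀ hc₀U)
  have hRHS : ∑ c ∈ U, w c * ((1 - ε c) ^ (-(n:ℤ))) = (∑ c ∈ U, P c * q c) / PU := by
    rw [Finset.sum_div]
    refine Finset.sum_congr rfl fun c hc => ?_
    rw [hwdef, hqdef]
    rw [zpow_neg, zpow_natCast, ← inv_pow]
    ring
  rw [hRHS] at hJensen
  have hkey : y ^ (-(n:ℤ)) < (δ * PU)⁻¹ := by
    calc y ^ (-(n:ℤ)) ≤ (∑ c ∈ U, P c * q c) / PU := hJensen
      _ < δ⁻¹ / PU := by gcongr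
      _ = (δ * PU)⁻¹ := by rw [mul_inv, div_eq_mul_inv]
  -- invert
  rw [zpow_neg, zpow_natCast] at hkey
  have hyn : δ * PU < y ^ n :=
    (inv_lt_inv₀ (pow_pos hy_pos n) (by positivity)).mp hkey
  have hPU_ne : PU ≠ 0 := hPU_pos.ne'
  have hlog : Real.log δ + Real.log PU < n * Real.log y := by
    have hll := Real.log_lt_log (by positivity) hyn
    rwa [Real.log_mul hδ0.ne' hPU_ne, Real.log_pow] at hll
  have hmn : ((n:ℝ)) = (m:ℝ) - 1 := by
    rw [hndef, Nat.cast_sub (by omega : 1 ≤ m), Nat.cast_one]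
  have hm2 : (2:ℝ) ≤ (m:ℝ) := by exact_mod_cast hm
  have hn_posR : (0:ℝ) < (n:ℝ) := by rw [hmn]; linarith
  have hlogy : (Real.log δ + Real.log PU) / (n:ℝ) < Real.log y :=
    (div_lt_iff₀ hn_posR).mpr (by rw [mul_comm]; exact hlog)
  have hnum : -(Real.log (1 / PU) + Real.log (2 * m / δ)) ≤ Real.log δ + Real.log PU := by
    have h2m : Real.log (2 * (m:ℝ) / δ) = Real.log (2 * (m:ℝ)) - Real.log δ :=
      Real.log_div (by positivity) hδ0.ne'
    have hlPU : Real.log (1 / PU) = - Real.log PU := by rw [one_div, Real.log_inv]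
    have h2m0 : (0:ℝ) ≤ Real.log (2 * (m:ℝ)) := Real.log_nonneg (by linarith)
    rw [h2m, hlPU]; linarith
  have hexp : Real.exp (-((Real.log (1 / PU) + Real.log (2 * (m:ℝ) / δ)) / ((m : ℝ) - 1))) ≤ y := by
    rw [← Real.exp_log hy_pos]
    apply Real.exp_le_exp.mpr
    rw [← hmn, ← neg_div]
    calc -(Real.log (1 / PU) + Real.log (2 * (m:ℝ) / δ)) / (n:ℝ)
        ≤ (Real.log δ + Real.log PU) / (n:ℝ) := by gcongr ?_ / (n:ℝ)
      _ ≤ Real.log y := hlogy.le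
  -- identify eps with 1 - y
  have hQ : ∀ c, Qstar c = if c ∈ U then w c else 0 := fun c => by
    show (if c ∈ U then P c / PU else 0) = _
    by_cases hc : c ∈ U <;> simp [hc, hwdef]
  have heps1 : eps = ∑ c ∈ U, w c * ε c := by
    show (∑ c, Qstar c * (D {x | h c x ≠ t x}).toReal) = _
    calc ∑ c, Qstar c * (D {x | h c x ≠ t x}).toReal
        = ∑ c, (if c ∈ U then w c * ε c else 0) := by
          refine Finset.sum_congr rfl fun c _ => ?_
          rw [hQ c]; by_cases hc : c ∈ U <;> simp [hc, hεdef]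
      _ = ∑ c ∈ U, w c * ε c := by rw [Finset.sum_ite_mem, Finset.univ_inter]
  have heps2 : eps = 1 - y := by
    have hsplit : ∑ c ∈ U, w c * (1 - ε c) = ∑ c ∈ U, w c - ∑ c ∈ U, w c * ε c := by
      rw [← Finset.sum_sub_distrib]; exact Finset.sum_congr rfl fun c _ => by ring
    rw [heps1, hydef, hsplit, hw1]; ring
  rw [heps2]
  linarith [hexp]
end

section
/- Weakened (McAllester-form) realizable PAC-Bayes bound: For any probability distribution P on a finite concept space H, any probability distribution D on the instance space X, any integer m ≥ 2, and any 0 < δ ≤ 1, assume realizability, i.e. the target concept t belongs to H and P(t) > 0. Then with probability at least 1 − δ over the choice of an i.i.d. sample S of m instances drawn from D, the Bayesian posterior Q* satisfies ε(Q*) ≤ (ln(1/P(U)) + ln(2m/δ))/(m − 1). (This follows from the realizable PAC-Bayes theorem via the inequality −ln(1 − x) ≥ x for x ∈ [0,1).) -/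
open MeasureTheory Finset

private lemma pac_aux_pow_exp {q : ℝ} (hq0 : 0 ≤ q) (hq1 : q ≤ 1) {m : ℕ} (hm : 2 ≤ m) :
    q ^ m * Real.exp (((m : ℝ) - 1) * (1 - q)) ≤ 1 := by
  have h1 : q ≤ Real.exp (q - 1) := by
    have := Real.add_one_le_exp (q - 1); linarith
  have hcast : ((m - 1 : ℕ) : ℝ) = (m : ℝ) - 1 := by
    rw [Nat.cast_sub (by omega)]; norm_num
  have h4 : Real.exp (q - 1) ^ (m - 1) = Real.exp (((m:ℝ) - 1) * (q - 1)) := by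
    rw [← Real.exp_nat_mul, hcast]
  have h5 : q ^ m ≤ Real.exp (((m:ℝ)-1)*(q-1)) :=
    le_trans (pow_le_pow_of_le_one hq0 hq1 (Nat.sub_le m 1))
      (le_of_le_of_eq (pow_le_pow_left₀ hq0 h1 _) h4)
  calc q ^ m * Real.exp (((m : ℝ) - 1) * (1 - q))
      ≤ Real.exp (((m:ℝ)-1)*(q-1)) * Real.exp (((m : ℝ) - 1) * (1 - q)) :=
        mul_le_mul_of_nonneg_right h5 (Real.exp_nonneg _)
    _ = 1 := by
        rw [← Real.exp_add, show ((m:ℝ)-1)*(q-1) + ((m:ℝ)-1)*(1-q) = 0 by ring, Real.exp_zero]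


/-- **Weakened (McAllester-form) realizable PAC-Bayes bound.** Assume the target concept
`t` is realized by some `c₀ ∈ H` with prior weight `P c₀ > 0`. Then with probability at
least `1 - δ` over an i.i.d. sample `S` of size `m ≥ 2` from `D`, the Bayesian posterior
`Q*` satisfies `ε(Q*) ≤ (ln(1/P(U)) + ln(2m/δ)) / (m - 1)`. -/
theorem pac_bayes_realizable_mcallester
    {X : Type*} [MeasurableSpace X] (D : Measure X) [IsProbabilityMeasure D]
    {H : Type*} [Fintype H] [DecidableEq H]
    (h : H → X → Bool) (hMeas : ∀ c, Measurable (h c))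
    (t : X → Bool) (ht : Measurable t)
    (c₀ : H) (hc₀ : h c₀ = t)
    (P : H → ℝ) (hP0 : ∀ c, 0 ≤ P c) (hP1 : ∑ c, P c = 1) (hreal : 0 < P c₀)
    (m : ℕ) (hm : 2 ≤ m)
    (δ : ℝ) (hδ0 : 0 < δ) (hδ1 : δ ≤ 1) :
    ENNReal.ofReal (1 - δ) ≤
      Measure.pi (fun _ : Fin m => D)
        {S : Fin m → X |
          -- the set of concepts consistent with the sample `S`
          let U : Finset H := univ.filter fun c => ∀ i : Fin m, h c (S i) = t (S i)
          -- its total prior probability (the marginal likelihood of the data)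
          let PU : ℝ := ∑ c ∈ U, P c
          -- the Bayesian posterior
          let Qstar : H → ℝ := fun c => if c ∈ U then P c / PU else 0
          -- its expected generalization error
          let eps : ℝ := ∑ c, Qstar c * (D {x | h c x ≠ t x}).toReal
          eps ≤ (Real.log (1 / PU) + Real.log (2 * m / δ)) / ((m : ℝ) - 1)} := by
  classical
  set μ : Measure (Fin m → X) := Measure.pi (fun _ : Fin m => D) with hμ
  -- generalization error
  set ε : H → ℝ := fun c => (D {x | h c x ≠ t x}).toReal with hε
  -- agreement set and its measure
  set A : H → Set X := fun c => {x | h c x = t x} with hA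
  have hAmeas : ∀ c, MeasurableSet (A c) := fun c =>
    measurableSet_eq_fun (hMeas c) ht
  have hAc : ∀ c, (A c)ᶜ = {x | h c x ≠ t x} := by
    intro c; ext x; simp [hA]
  have hD1 : ∀ c, D (A c) ≤ 1 := fun c => prob_le_one
  have hεeq : ∀ c, ε c = 1 - (D (A c)).toReal := by
    intro c
    show (D {x | h c x ≠ t x}).toReal = _
    rw [← hAc c, measure_compl (hAmeas c) (measure_ne_top _ _), measure_univ,
      ENNReal.toReal_sub_of_le (hD1 c) (by simp), ENNReal.toReal_one]
  -- consistency events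
  set E : H → Set (Fin m → X) := fun c => {S | ∀ i, h c (S i) = t (S i)} with hE
  have hEpi : ∀ c, E c = Set.univ.pi (fun _ : Fin m => A c) := by
    intro c; ext S; simp [hE, hA, Set.mem_pi]
  have hEmeas : ∀ c, MeasurableSet (E c) := by
    intro c; rw [hEpi c]; exact MeasurableSet.univ_pi (fun _ => hAmeas c)
  have hEmeasure : ∀ c, μ (E c) = D (A c) ^ m := by
    intro c
    rw [hEpi c, hμ, Measure.pi_pi]
    simp
  -- the moment function
  set f : H → (Fin m → X) → ENNReal := fun c =>
    (E c).indicator (fun _ => ENNReal.ofReal (P c * Real.exp (((m:ℝ) - 1) * ε c))) with hf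
  set W : (Fin m → X) → ENNReal := fun S => ∑ c, f c S with hW
  have hfmeas : ∀ c, Measurable (f c) := fun c => measurable_const.indicator (hEmeas c)
  have hWmeas : Measurable W := Finset.measurable_sum _ (fun c _ => hfmeas c)
  -- expectation bound
  have hint : ∫⁻ S, W S ∂μ ≤ 1 := by
    rw [hW, lintegral_finset_sum _ (fun c _ => hfmeas c)]
    have hterm : ∀ c, ∫⁻ S, f c S ∂μ ≤ ENNReal.ofReal (P c) := by
      intro c
      rw [hf]
      simp only
      rw [lintegral_indicator_const (hEmeas c), hEmeasure c]
      set q : ℝ := (D (A c)).toReal with hq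
      have hq0 : 0 ≤ q := ENNReal.toReal_nonneg
      have hq1 : q ≤ 1 := by
        rw [hq]; exact ENNReal.toReal_le_of_le_ofReal one_pos.le (by simpa using hD1 c)
      have hDq : D (A c) = ENNReal.ofReal q := (ENNReal.ofReal_toReal (measure_ne_top _ _)).symm
      rw [hDq, ← ENNReal.ofReal_pow hq0, ← ENNReal.ofReal_mul (mul_nonneg (hP0 c) (Real.exp_nonneg _))]
      apply ENNReal.ofReal_le_ofReal
      rw [hεeq c, ← hq]
      calc P c * Real.exp (((m:ℝ)-1) * (1-q)) * q ^ m
          = P c * (q ^ m * Real.exp (((m:ℝ)-1) * (1-q))) := by ring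
        _ ≤ P c * 1 := mul_le_mul_of_nonneg_left (pac_aux_pow_exp hq0 hq1 hm) (hP0 c)
        _ = P c := mul_one _
    calc ∑ c, ∫⁻ S, f c S ∂μ ≤ ∑ c, ENNReal.ofReal (P c) := Finset.sum_le_sum (fun c _ => hterm c)
      _ = ENNReal.ofReal (∑ c, P c) := (ENNReal.ofReal_sum_of_nonneg (fun c _ => hP0 c)).symm
      _ = 1 := by rw [hP1, ENNReal.ofReal_one]
  -- Markov
  have hδinv : (0:ℝ) < 1/δ := by positivity
  set B : Set (Fin m → X) := {S | ENNReal.ofReal (1/δ) ≤ W S} with hB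
  have hBmeas : MeasurableSet B := measurableSet_le measurable_const hWmeas
  have hBsmall : μ B ≤ ENNReal.ofReal δ := by
    calc μ B ≤ (∫⁻ S, W S ∂μ) / ENNReal.ofReal (1/δ) :=
          meas_ge_le_lintegral_div hWmeas.aemeasurable
            (ENNReal.ofReal_pos.mpr hδinv).ne' ENNReal.ofReal_ne_top
      _ ≤ 1 / ENNReal.ofReal (1/δ) := by gcongr
      _ = ENNReal.ofReal δ := by
          rw [one_div, one_div, ENNReal.ofReal_inv_of_pos hδ0, inv_inv]
  -- the good event implies the desired bound
  have hsub : Bᶜ ⊆ {S : Fin m → X |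
          let U : Finset H := univ.filter fun c => ∀ i : Fin m, h c (S i) = t (S i)
          let PU : ℝ := ∑ c ∈ U, P c
          let Qstar : H → ℝ := fun c => if c ∈ U then P c / PU else 0
          let eps : ℝ := ∑ c, Qstar c * (D {x | h c x ≠ t x}).toReal
          eps ≤ (Real.log (1 / PU) + Real.log (2 * m / δ)) / ((m : ℝ) - 1)} := by
    intro S hS
    simp only [Set.mem_compl_iff, hB, Set.mem_setOf_eq, not_le] at hS
    rw [Set.mem_setOf_eq]
    intro U PU Qstar eps
    -- basic facts
    have hmemU : ∀ c, c ∈ U ↔ S ∈ E c := by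
      intro c
      show c ∈ univ.filter (fun c => ∀ i : Fin m, h c (S i) = t (S i)) ↔ _
      rw [Finset.mem_filter]
      simp [hE]
    have hc₀U : c₀ ∈ U := by rw [hmemU]; intro i; rw [hc₀]
    have hPU0 : 0 < PU :=
      lt_of_lt_of_le hreal (Finset.single_le_sum (fun c _ => hP0 c) hc₀U)
    -- rewrite W S as a real sum over U
    have hWS : W S = ENNReal.ofReal (∑ c ∈ U, P c * Real.exp (((m:ℝ)-1) * ε c)) := by
      rw [hW]
      simp only
      rw [ENNReal.ofReal_sum_of_nonneg (fun c _ => mul_nonneg (hP0 c) (Real.exp_nonneg _))]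
      rw [← Finset.sum_filter_add_sum_filter_not univ (fun c => c ∈ U)]
      have h2' : ∀ c ∈ univ.filter (fun c => ¬ c ∈ U), f c S = 0 := by
        intro c hc
        rw [Finset.mem_filter] at hc
        rw [hf]
        exact Set.indicator_of_notMem (fun hSE => hc.2 ((hmemU c).mpr hSE)) _
      rw [Finset.sum_congr rfl h2', Finset.sum_const_zero, add_zero]
      have : univ.filter (fun c => c ∈ U) = U := by
        ext c; simp
      rw [this]
      apply Finset.sum_congr rfl
      intro c hc
      rw [hf]
      exact Set.indicator_of_mem ((hmemU c).mp hc) _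
    have hRlt : ∑ c ∈ U, P c * Real.exp (((m:ℝ)-1) * ε c) < 1/δ := by
      rw [hWS] at hS
      exact (ENNReal.ofReal_lt_ofReal_iff hδinv).mp hS
    -- Jensen
    set w : H → ℝ := fun c => P c / PU with hw
    have hw0 : ∀ c ∈ U, 0 ≤ w c := fun c _ => div_nonneg (hP0 c) hPU0.le
    have hw1 : ∑ c ∈ U, w c = 1 := by
      rw [hw, ← Finset.sum_div, div_self hPU0.ne']
    have hjensen := convexOn_exp.map_sum_le (t := U) (w := w)
      (p := fun c => ((m:ℝ)-1) * ε c) hw0 hw1 (fun c _ => Set.mem_univ _)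
    simp only [smul_eq_mul] at hjensen
    have heps : ∑ c ∈ U, w c * (((m:ℝ)-1) * ε c) = ((m:ℝ)-1) * eps := by
      have : eps = ∑ c ∈ U, w c * ε c := by
        show (∑ c, Qstar c * ε c) = _
        rw [← Finset.sum_filter_add_sum_filter_not univ (fun c => c ∈ U)]
        have hz : ∀ c ∈ univ.filter (fun c => ¬ c ∈ U), Qstar c * ε c = 0 := by
          intro c hc
          rw [Finset.mem_filter] at hc
          show (if c ∈ U then P c / PU else 0) * ε c = 0
          rw [if_neg hc.2, zero_mul]
        rw [Finset.sum_congr rfl hz, Finset.sum_const_zero, add_zero]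
        have hUU : univ.filter (fun c => c ∈ U) = U := by ext c; simp
        rw [hUU]
        apply Finset.sum_congr rfl
        intro c hc
        show (if c ∈ U then P c / PU else 0) * ε c = w c * ε c
        rw [if_pos hc]
      rw [this, Finset.mul_sum]
      apply Finset.sum_congr rfl
      intro c _; ring
    have hrhs : ∑ c ∈ U, w c * Real.exp (((m:ℝ)-1) * ε c) < 1 / (δ * PU) := by
      have : ∑ c ∈ U, w c * Real.exp (((m:ℝ)-1) * ε c)
          = (∑ c ∈ U, P c * Real.exp (((m:ℝ)-1) * ε c)) / PU := by
        rw [Finset.sum_div]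
        apply Finset.sum_congr rfl
        intro c _
        rw [hw]; ring
      rw [this]
      rw [div_lt_iff₀ hPU0]
      calc ∑ c ∈ U, P c * Real.exp (((m:ℝ)-1) * ε c) < 1/δ := hRlt
        _ = 1 / (δ * PU) * PU := by
            field_simp
    have hexp : Real.exp (((m:ℝ)-1) * eps) < 1 / (δ * PU) := by
      rw [← heps]; exact lt_of_le_of_lt hjensen hrhs
    have hlog : ((m:ℝ)-1) * eps ≤ Real.log (1 / (δ * PU)) := by
      rw [Real.le_log_iff_exp_le (by positivity)]
      exact hexp.le
    have hlogsplit : Real.log (1 / (δ * PU)) = Real.log (1/PU) + Real.log (1/δ) := by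
      rw [show (1:ℝ) / (δ * PU) = (1/PU) * (1/δ) by field_simp, Real.log_mul (by positivity) (by positivity)]
    have hlogmono : Real.log (1/δ) ≤ Real.log (2 * m / δ) := by
      apply Real.log_le_log hδinv
      have h2m : (1:ℝ) ≤ 2 * m := by
        have : (2:ℝ) ≤ m := by exact_mod_cast hm
        linarith
      gcongr
    have hm1 : (0:ℝ) < (m:ℝ) - 1 := by
      have : (2:ℝ) ≤ m := by exact_mod_cast hm
      linarith
    rw [le_div_iff₀ hm1]
    calc eps * ((m:ℝ)-1) = ((m:ℝ)-1) * eps := mul_comm _ _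
      _ ≤ Real.log (1 / (δ * PU)) := hlog
      _ = Real.log (1/PU) + Real.log (1/δ) := hlogsplit
      _ ≤ Real.log (1/PU) + Real.log (2 * m / δ) := by linarith
  -- conclude
  calc ENNReal.ofReal (1 - δ) ≤ 1 - ENNReal.ofReal δ := by
        rw [← ENNReal.ofReal_one, ← ENNReal.ofReal_sub _ hδ0.le]
    _ ≤ 1 - μ B := by
        exact tsub_le_tsub le_rfl hBsmall
    _ = μ Bᶜ := by
        rw [measure_compl hBmeas (measure_ne_top _ _), measure_univ]
    _ ≤ _ := measure_mono hsub
end
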